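/- arXiv:1105.0783 — 5 statements merged into one kernel-verified Lean document; each statement's English description precedes it below -/
import Mathlib

section
/- Let (a_m)_{m≥1} be a bounded sequence of real numbers and (ε_m)_{m≥1} a sequence of real numbers with ε_m → 0 such that a_{m+1} − a_m ≤ ε_m for every m. Then the set of cluster points of (a_m) is exactly the closed interval [liminf_{m→∞} a_m, limsup_{m→∞} a_m]; in particular, every real number t with liminf_{m→∞} a_m ≤ t ≤ limsup_{m→∞} a_m is the limit of some subsequence of (a_m). -/
open Filter

/-- If `(a m)` is a bounded real sequence and `ε m → 0` with
`a (m+1) - a m ≤ ε m` for all `m`, then the set of cluster points (limits of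
subsequences) of `a` is exactly the closed interval `[liminf a, limsup a]`. -/
theorem cluster_points_eq_Icc_liminf_limsup
    (a ε : ℕ → ℝ)
    (hbd : ∃ C : ℝ, ∀ m, |a m| ≤ C)
    (hε : Tendsto ε atTop (nhds 0))
    (hstep : ∀ m, a (m + 1) - a m ≤ ε m) :
    {t : ℝ | ∃ φ : ℕ → ℕ, StrictMono φ ∧ Tendsto (a ∘ φ) atTop (nhds t)}
      = Set.Icc (liminf a atTop) (limsup a atTop) := by
  obtain ⟨C, hC⟩ := hbd
  have hub : ∀ m, a m ≤ C := fun m => (abs_le.1 (hC m)).2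
  have hlb : ∀ m, -C ≤ a m := fun m => (abs_le.1 (hC m)).1
  have hBdAbove : IsBoundedUnder (· ≤ ·) atTop a := isBoundedUnder_of ⟨C, hub⟩
  have hBdBelow : IsBoundedUnder (· ≥ ·) atTop a := isBoundedUnder_of ⟨-C, fun m => hlb m⟩
  have hCobddLe : IsCoboundedUnder (· ≤ ·) atTop a := hBdBelow.isCoboundedUnder_le
  have hCobddGe : IsCoboundedUnder (· ≥ ·) atTop a := hBdAbove.isCoboundedUnder_ge
  ext t
  simp only [Set.mem_setOf_eq, Set.mem_Icc]
  constructor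
  · rintro ⟨φ, hφ, ht⟩
    have hφtop : Tendsto φ atTop atTop := hφ.tendsto_atTop
    constructor
    · -- liminf a ≤ t
      refine le_of_forall_pos_le_add fun δ hδ => ?_
      have h1 : ∀ᶠ n in atTop, a (φ n) ≤ t + δ := by
        filter_upwards [ht (Metric.ball_mem_nhds t hδ)] with n hn
        have := abs_lt.1 (by simpa [Real.dist_eq] using hn)
        linarith [this.2]
      exact liminf_le_of_frequently_le (hφtop.frequently h1.frequently) hBdBelow
    · -- t ≤ limsup a
      refine le_of_forall_pos_le_add fun δ hδ => ?_
      have h1 : ∀ᶠ n in atTop, t - δ ≤ a (φ n) := by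
        filter_upwards [ht (Metric.ball_mem_nhds t hδ)] with n hn
        have := abs_lt.1 (by simpa [Real.dist_eq] using hn)
        linarith [this.1]
      have : t - δ ≤ limsup a atTop :=
        le_limsup_of_frequently_le (hφtop.frequently h1.frequently) hBdAbove
      linarith
  · rintro ⟨h1, h2⟩
    -- key: for every δ > 0, frequently |a m - t| < δ
    have key : ∀ δ > 0, ∃ᶠ m in atTop, |a m - t| < δ := by
      intro δ hδ
      rw [frequently_atTop]
      intro N
      by_contra hcon
      push_neg at hcon
      obtain ⟨N₁, hN₁⟩ := (Metric.tendsto_atTop.1 hε) δ hδ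
      set N' := max N N₁ with hN'
      have hεsmall : ∀ k ≥ N', ε k < δ := by
        intro k hk
        have := hN₁ k (le_trans (le_max_right _ _) hk)
        rw [Real.dist_eq, sub_zero] at this
        exact (abs_lt.1 this).2
      have hfar : ∀ m ≥ N', a m ≤ t - δ ∨ t + δ ≤ a m := by
        intro m hm
        have hm' := hcon m (le_trans (le_max_left _ _) hm)
        rcases le_or_gt (a m) (t - δ) with h | h
        · exact Or.inl h
        · right
          by_contra h'
          push_neg at h'
          exact absurd (abs_lt.2 ⟨by linarith, by linarith⟩) (not_lt.2 hm')
      -- once below, stays below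
      have hstay : ∀ m ≥ N', a m ≤ t - δ → ∀ k, a (m + k) ≤ t - δ := by
        intro m hm hle k
        induction k with
        | zero => simpa using hle
        | succ k ih =>
          have hmk : m + k ≥ N' := le_trans hm (Nat.le_add_right m k)
          have hε' := hεsmall (m + k) hmk
          have hstep' := hstep (m + k)
          have : a (m + k + 1) < t := by linarith
          rcases hfar (m + k + 1) (le_trans hmk (Nat.le_succ _)) with h | h
          · exact h
          · linarith
      by_cases hbelow : ∃ m ≥ N', a m ≤ t - δ
      · obtain ⟨m, hm, hle⟩ := hbelow
        have hev : ∀ᶠ k in atTop, a k ≤ t - δ := by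
          rw [eventually_atTop]
          exact ⟨m, fun k hk => by
            obtain ⟨j, rfl⟩ := Nat.exists_eq_add_of_le hk
            exact hstay m hm hle j⟩
        have : limsup a atTop ≤ t - δ := limsup_le_of_le hCobddLe hev
        linarith
      · push_neg at hbelow
        have hev : ∀ᶠ k in atTop, t + δ ≤ a k := by
          rw [eventually_atTop]
          refine ⟨N', fun k hk => ?_⟩
          rcases hfar k hk with h | h
          · exact absurd h (by linarith [hbelow k hk])
          · exact h
        have : t + δ ≤ liminf a atTop := le_liminf_of_le hCobddGe hev
        linarith
    -- t is a cluster point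
    have hcp : MapClusterPt t atTop a := by
      rw [mapClusterPt_iff_frequently]
      intro s hs
      obtain ⟨δ, hδ, hball⟩ := Metric.mem_nhds_iff.1 hs
      refine (key δ hδ).mono fun m hm => hball ?_
      simpa [Metric.mem_ball, Real.dist_eq] using hm
    exact TopologicalSpace.FirstCountableTopology.tendsto_subseq hcp
end

section
/- Let δ > 0 and let K1, K2 : ℝ → ℝ be continuous with δ² ≤ K1(t) ≤ K2(t) for all t ∈ ℝ, and suppose that the set {t ∈ ℝ : K1(t) = K2(t)} has no accumulation point in ℝ. For j = 1, 2 and s ∈ ℝ let y_{j,s} be the solution of y'' + K_j·y = 0 with y(s) = 0, y'(s) = 1, and let z_j(s) be its least zero in (s, ∞) (which exists since K_j(t) ≥ δ² > 0). Then z_2(s) < z_1(s), strictly, for every s ∈ ℝ. -/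
open Filter Set Topology

/-- Auxiliary: a continuous function with `y s = 0`, `y' s = 1` that does not
vanish on `(s, z)` is positive there. -/
private lemma pos_on_aux (y y' : ℝ → ℝ) (s z : ℝ)
    (hy : ∀ t, HasDerivAt y (y' t) t) (h0 : y s = 0) (h1 : y' s = 1)
    (hne : ∀ t, s < t → t < z → y t ≠ 0) :
    ∀ t, s < t → t < z → 0 < y t := by
  intro t hst htz
  have hslope : Tendsto (slope y s) (𝓝[≠] s) (𝓝 1) := by
    have h := hy s
    rw [hasDerivAt_iff_tendsto_slope] at h
    rwa [h1] at h
  have hslope' : Tendsto (slope y s) (𝓝[>] s) (𝓝 1) :=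
    hslope.mono_left (nhdsWithin_mono s fun u hu => ne_of_gt hu)
  have h2 : ∀ᶠ u in 𝓝[>] s, 0 < slope y s u :=
    hslope'.eventually (eventually_gt_nhds one_pos)
  have h3 : ∀ᶠ u in 𝓝[>] s, u ∈ Ioo s t :=
    Ioo_mem_nhdsGT_of_mem ⟨le_refl s, hst⟩
  obtain ⟨u, hu1, hu2⟩ := (h2.and h3).exists
  have hupos : 0 < y u := by
    have : slope y s u = y u / (u - s) := by
      simp [slope_def_field, h0, div_eq_mul_inv]
    rw [this] at hu1
    have hus : 0 < u - s := sub_pos.2 hu2.1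
    nlinarith [mul_pos hu1 hus, div_mul_cancel₀ (y u) (ne_of_gt hus)]
  by_contra hcon
  have hyt : y t < 0 := lt_of_le_of_ne (not_lt.1 hcon) (hne t hst htz)
  have hcont : ContinuousOn y (Icc u t) := fun x _ => ((hy x).continuousAt).continuousWithinAt
  have h0mem : (0 : ℝ) ∈ Icc (y t) (y u) := ⟨le_of_lt hyt, le_of_lt hupos⟩
  obtain ⟨c, hc, hyc⟩ := intermediate_value_Icc' (le_of_lt hu2.2) hcont h0mem
  exact hne c (lt_of_lt_of_le hu2.1 hc.1) (lt_of_le_of_lt hc.2 htz) hyc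

/-- strict comparison of first conjugate points at every basepoint.
With `δ² ≤ K1 ≤ K2`, `K1 = K2` only on a set with no accumulation point, and
`y j s` the solution of `y'' + K_j y = 0` with `y s = 0`, `y' s = 1`, the least
zero `z2 s` of `y2 s` in `(s, ∞)` is strictly smaller than the least zero
`z1 s` of `y1 s`, for every `s`. -/
theorem first_conjugate_point_strict_comparison
    (δ : ℝ) (hδ : 0 < δ)
    (K1 K2 : ℝ → ℝ) (hK1 : Continuous K1) (hK2 : Continuous K2)
    (hlb : ∀ t : ℝ, δ ^ 2 ≤ K1 t) (hle : ∀ t : ℝ, K1 t ≤ K2 t)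
    (hacc : ∀ x : ℝ, ¬ AccPt x (Filter.principal {t : ℝ | K1 t = K2 t}))
    (y1 y1' y2 y2' : ℝ → ℝ → ℝ)
    (hy1 : ∀ s t : ℝ, HasDerivAt (y1 s) (y1' s t) t)
    (hy1' : ∀ s t : ℝ, HasDerivAt (y1' s) (-(K1 t) * y1 s t) t)
    (hy2 : ∀ s t : ℝ, HasDerivAt (y2 s) (y2' s t) t)
    (hy2' : ∀ s t : ℝ, HasDerivAt (y2' s) (-(K2 t) * y2 s t) t)
    (h10 : ∀ s : ℝ, y1 s s = 0) (h11 : ∀ s : ℝ, y1' s s = 1)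
    (h20 : ∀ s : ℝ, y2 s s = 0) (h21 : ∀ s : ℝ, y2' s s = 1)
    (z1 z2 : ℝ → ℝ)
    (hz1 : ∀ s : ℝ, s < z1 s ∧ y1 s (z1 s) = 0 ∧ ∀ t : ℝ, s < t → t < z1 s → y1 s t ≠ 0)
    (hz2 : ∀ s : ℝ, s < z2 s ∧ y2 s (z2 s) = 0 ∧ ∀ t : ℝ, s < t → t < z2 s → y2 s t ≠ 0) :
    ∀ s : ℝ, z2 s < z1 s := by
  intro s
  by_contra hcon
  push_neg at hcon   -- hcon : z1 s ≤ z2 s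
  obtain ⟨hs1, hy10, hne1⟩ := hz1 s
  obtain ⟨hs2, hy20, hne2⟩ := hz2 s
  have hpos1 : ∀ t, s < t → t < z1 s → 0 < y1 s t :=
    pos_on_aux (y1 s) (y1' s) s (z1 s) (hy1 s) (h10 s) (h11 s) hne1
  have hpos2 : ∀ t, s < t → t < z2 s → 0 < y2 s t :=
    pos_on_aux (y2 s) (y2' s) s (z2 s) (hy2 s) (h20 s) (h21 s) hne2
  -- the Wronskian
  set W : ℝ → ℝ := fun t => y1' s t * y2 s t - y1 s t * y2' s t with hWdef
  have hW : ∀ t, HasDerivAt W ((K2 t - K1 t) * (y1 s t * y2 s t)) t := by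
    intro t
    have h := ((hy1' s t).mul (hy2 s t)).sub ((hy1 s t).mul (hy2' s t))
    convert h using 1
    all_goals first | rfl | ring
  have hWs : W s = 0 := by simp [hWdef, h10 s, h20 s]
  -- nonnegativity of y1, y2 on [s, z1 s]
  have hy1nn : ∀ t ∈ Icc s (z1 s), 0 ≤ y1 s t := by
    rintro t ⟨ht1, ht2⟩
    rcases eq_or_lt_of_le ht1 with h | h
    · simp [← h, h10 s]
    rcases eq_or_lt_of_le ht2 with h' | h'
    · simp [h', hy10]
    · exact le_of_lt (hpos1 t h h')
  have hy2nn : ∀ t ∈ Icc s (z1 s), 0 ≤ y2 s t := by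
    rintro t ⟨ht1, ht2⟩
    rcases eq_or_lt_of_le ht1 with h | h
    · simp [← h, h20 s]
    have ht2' : t ≤ z2 s := le_trans ht2 hcon
    rcases eq_or_lt_of_le ht2' with h' | h'
    · simp [h', hy20]
    · exact le_of_lt (hpos2 t h h')
  -- W is monotone on [s, z1 s]
  have hWmono : MonotoneOn W (Icc s (z1 s)) := by
    apply monotoneOn_of_deriv_nonneg (convex_Icc s (z1 s))
      (fun x _ => ((hW x).continuousAt).continuousWithinAt)
      (fun x hx => ((hW x).differentiableAt).differentiableWithinAt)
    intro x hx
    rw [interior_Icc] at hx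
    rw [(hW x).deriv]
    have h1 : 0 ≤ K2 x - K1 x := sub_nonneg.2 (hle x)
    have h2 : 0 ≤ y1 s x * y2 s x :=
      mul_nonneg (hy1nn x ⟨le_of_lt hx.1, le_of_lt hx.2⟩)
        (hy2nn x ⟨le_of_lt hx.1, le_of_lt hx.2⟩)
    exact mul_nonneg h1 h2
  -- y1' s (z1 s) ≤ 0
  have hle0 : y1' s (z1 s) ≤ 0 := by
    have h := hy1 s (z1 s)
    rw [hasDerivAt_iff_tendsto_slope] at h
    have h' : Tendsto (slope (y1 s) (z1 s)) (𝓝[<] (z1 s)) (𝓝 (y1' s (z1 s))) :=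
      h.mono_left (nhdsWithin_mono _ fun u hu => ne_of_lt hu)
    refine le_of_tendsto h' ?_
    filter_upwards [Ioo_mem_nhdsLT_of_mem ⟨hs1, le_refl (z1 s)⟩] with u hu
    have huz : u - z1 s < 0 := sub_neg.2 hu.2
    have hyu : 0 < y1 s u := hpos1 u hu.1 hu.2
    have : slope (y1 s) (z1 s) u = y1 s u / (u - z1 s) := by
      simp [slope_def_field, hy10, div_eq_mul_inv]
    rw [this]
    exact le_of_lt (div_neg_of_pos_of_neg hyu huz)
  -- W (z1 s) ≤ 0 and ≥ 0, hence W ≡ 0 on [s, z1 s]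
  have hWz1 : W (z1 s) ≤ 0 := by
    have : W (z1 s) = y1' s (z1 s) * y2 s (z1 s) := by simp [hWdef, hy10]
    rw [this]
    exact mul_nonpos_of_nonpos_of_nonneg hle0 (hy2nn (z1 s) ⟨le_of_lt hs1, le_refl _⟩)
  have hWzero : ∀ t ∈ Icc s (z1 s), W t = 0 := by
    intro t ht
    have h1 : W s ≤ W t := hWmono ⟨le_refl s, le_of_lt hs1⟩ ht ht.1
    have h2 : W t ≤ W (z1 s) := hWmono ht ⟨le_of_lt hs1, le_refl _⟩ ht.2
    rw [hWs] at h1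
    linarith
  -- hence K1 = K2 on (s, z1 s)
  have hKeq : ∀ t ∈ Ioo s (z1 s), K1 t = K2 t := by
    intro t ht
    have hWev : W =ᶠ[𝓝 t] fun _ => (0 : ℝ) := by
      filter_upwards [Ioo_mem_nhds ht.1 ht.2] with u hu
      exact hWzero u ⟨le_of_lt hu.1, le_of_lt hu.2⟩
    have hW0 : HasDerivAt W 0 t :=
      (hasDerivAt_const t (0 : ℝ)).congr_of_eventuallyEq hWev
    have := (hW t).unique hW0
    have hy1pos := hpos1 t ht.1 ht.2
    have hy2pos := hpos2 t ht.1 (lt_of_lt_of_le ht.2 hcon)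
    have hprod : 0 < y1 s t * y2 s t := mul_pos hy1pos hy2pos
    have : K2 t - K1 t = 0 := by
      by_contra hne
      exact hne (by nlinarith [mul_ne_zero hne (ne_of_gt hprod)])
    linarith
  -- contradiction with no accumulation point
  set m : ℝ := (s + z1 s) / 2 with hm
  have hm1 : s < m := by simp [hm]; linarith
  have hm2 : m < z1 s := by simp [hm]; linarith
  apply hacc m
  rw [accPt_iff_nhds]
  intro U hU
  obtain ⟨ε, hε, hball⟩ := Metric.mem_nhds_iff.1 hU
  set r : ℝ := min ε (z1 s - m) with hr
  have hrpos : 0 < r := lt_min hε (by linarith)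
  refine ⟨m + r / 2, ⟨?_, ?_⟩, by linarith⟩
  · apply hball
    have hd : dist (m + r / 2) m = r / 2 := by
      rw [Real.dist_eq, show m + r / 2 - m = r / 2 by ring,
        abs_of_pos (by linarith : (0:ℝ) < r / 2)]
    rw [Metric.mem_ball, hd]
    have hrε : r ≤ ε := min_le_left _ _
    linarith
  · have h1 : s < m + r / 2 := by linarith
    have h2 : m + r / 2 < z1 s := by
      have : r ≤ z1 s - m := min_le_right _ _
      linarith
    exact hKeq (m + r / 2) ⟨h1, h2⟩
end

section
/- Let L > 0, δ > 0 and let K1, K2 : ℝ → ℝ be continuous and L-periodic (K_j(t + L) = K_j(t) for all t) with δ² ≤ K1(t) ≤ K2(t) for all t, and assume the set {t ∈ ℝ : K1(t) = K2(t)} has no accumulation point in ℝ. For j = 1, 2 and s ∈ ℝ let d_j(s) = z_j(s) − s, where z_j(s) is the least zero in (s, ∞) of the solution of y'' + K_j·y = 0 with y(s) = 0, y'(s) = 1. Then each function d_j : ℝ → (0, ∞) is continuous and L-periodic, and there exists ρ ∈ (0, 1) such that d_2(s) ≤ ρ·d_1(s) for all s ∈ ℝ. -/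
open Set


private lemma ode_unique_fwd (K : ℝ → ℝ) (hK : Continuous K)
    (f f' g g' : ℝ → ℝ)
    (hf : ∀ t, HasDerivAt f (f' t) t) (hf' : ∀ t, HasDerivAt f' (-(K t) * f t) t)
    (hg : ∀ t, HasDerivAt g (g' t) t) (hg' : ∀ t, HasDerivAt g' (-(K t) * g t) t)
    (a : ℝ) (hfa : f a = g a) (hfa' : f' a = g' a) (b : ℝ) (hab : a ≤ b)
    (t : ℝ) (ht : t ∈ Set.Icc a b) :
    f t = g t ∧ f' t = g' t := by
  obtain ⟨c, _, hc⟩ := isCompact_Icc.exists_isMaxOn (α := ℝ) (nonempty_Icc.2 hab)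
    (continuous_abs.comp hK).continuousOn
  set C : ℝ := 1 + |K c| with hC
  have hCpos : 0 < C := by positivity
  have hCb : ∀ r ∈ Icc a b, |K r| ≤ C - 1 := by
    intro r hr; have := hc hr; simpa [hC] using this
  set u : ℝ → ℝ := fun r => f r - g r with hu
  set u' : ℝ → ℝ := fun r => f' r - g' r with hu'
  have hud : ∀ r, HasDerivAt u (u' r) r := fun r => (hf r).fun_sub (hg r)
  have hu'd : ∀ r, HasDerivAt u' (-(K r) * u r) r := by
    intro r
    have := (hf' r).fun_sub (hg' r)
    simpa [hu, hu', mul_sub] using this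
  set E : ℝ → ℝ := fun r => (u r) ^ 2 + (u' r) ^ 2 with hE
  have hEd : ∀ r, HasDerivAt E (2 * u r * u' r + 2 * u' r * (-(K r) * u r)) r := by
    intro r
    have h1 : HasDerivAt (fun r => (u r) ^ 2) (2 * u r * u' r) r := by
      simpa [mul_comm, mul_assoc, mul_left_comm] using ((hud r).fun_pow 2)
    have h2 : HasDerivAt (fun r => (u' r) ^ 2) (2 * u' r * (-(K r) * u r)) r := by
      simpa [mul_comm, mul_assoc, mul_left_comm] using ((hu'd r).fun_pow 2)
    simpa using h1.fun_add h2
  set G : ℝ → ℝ := fun r => E r * Real.exp (-C * r) with hG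
  have hGd : ∀ r, HasDerivAt G
      ((2 * u r * u' r + 2 * u' r * (-(K r) * u r)) * Real.exp (-C * r)
        + E r * (-C * Real.exp (-C * r))) r := by
    intro r
    have he : HasDerivAt (fun r : ℝ => Real.exp (-C * r)) (-C * Real.exp (-C * r)) r := by
      simpa [mul_comm] using ((hasDerivAt_id r).const_mul (-C)).exp
    exact (hEd r).mul he
  have hGanti : AntitoneOn G (Icc a b) := by
    apply antitoneOn_of_deriv_nonpos (convex_Icc a b)
    · exact fun r _ => ((hGd r).continuousAt.continuousWithinAt)
    · exact fun r _ => ((hGd r).differentiableAt.differentiableWithinAt)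
    · intro r hr
      rw [interior_Icc] at hr
      rw [(hGd r).deriv]
      have hKr := hCb r (Ioo_subset_Icc_self hr)
      have hexp : 0 < Real.exp (-C * r) := Real.exp_pos _
      have habs := abs_le.1 hKr
      have key : 2 * u r * u' r + 2 * u' r * (-(K r) * u r) ≤ C * E r := by
        have h1 : 0 ≤ ((C - 1) - K r) * (u r + u' r) ^ 2 :=
          mul_nonneg (by linarith [habs.2]) (sq_nonneg _)
        have h2 : 0 ≤ ((C - 1) + K r) * (u r - u' r) ^ 2 :=
          mul_nonneg (by linarith [habs.1]) (sq_nonneg _)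
        have h3 : 0 ≤ (u r - u' r) ^ 2 := sq_nonneg _
        simp only [hE]
        nlinarith [h1, h2, h3]
      have : (2 * u r * u' r + 2 * u' r * (-(K r) * u r)) * Real.exp (-C * r)
          ≤ (C * E r) * Real.exp (-C * r) := by
        exact mul_le_mul_of_nonneg_right key hexp.le
      have heq : E r * (-C * Real.exp (-C * r)) = -((C * E r) * Real.exp (-C * r)) := by ring
      linarith [this]
  have hGt : G t ≤ 0 := by
    have := hGanti (left_mem_Icc.2 hab) ht ht.1
    have hGa : G a = 0 := by
      simp [hG, hE, hu, hu', hfa, hfa']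
    linarith
  have hGt0 : 0 ≤ G t := by
    have : 0 ≤ E t := by simp only [hE]; positivity
    exact mul_nonneg this (Real.exp_pos _).le
  have hEt : E t = 0 := by
    have hG0 : G t = 0 := le_antisymm hGt hGt0
    have hexp : Real.exp (-C * t) ≠ 0 := (Real.exp_pos _).ne'
    have : E t * Real.exp (-C * t) = 0 := hG0
    exact (mul_eq_zero.1 this).resolve_right hexp
  simp only [hE] at hEt
  have hu0 : u t = 0 := by
    have h1 : u t ^ 2 = 0 := by nlinarith [sq_nonneg (u t), sq_nonneg (u' t), hEt]
    exact pow_eq_zero_iff (by norm_num) |>.1 h1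
  have hu'0 : u' t = 0 := by
    have h1 : u' t ^ 2 = 0 := by nlinarith [sq_nonneg (u t), sq_nonneg (u' t), hEt]
    exact pow_eq_zero_iff (by norm_num) |>.1 h1
  constructor
  · simpa [hu, sub_eq_zero] using hu0
  · simpa [hu', sub_eq_zero] using hu'0

private lemma ode_unique (K : ℝ → ℝ) (hK : Continuous K)
    (f f' g g' : ℝ → ℝ)
    (hf : ∀ t, HasDerivAt f (f' t) t) (hf' : ∀ t, HasDerivAt f' (-(K t) * f t) t)
    (hg : ∀ t, HasDerivAt g (g' t) t) (hg' : ∀ t, HasDerivAt g' (-(K t) * g t) t)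
    (a : ℝ) (hfa : f a = g a) (hfa' : f' a = g' a) (t : ℝ) :
    f t = g t ∧ f' t = g' t := by
  rcases le_total a t with h | h
  · exact ode_unique_fwd K hK f f' g g' hf hf' hg hg' a hfa hfa' t h t ⟨h, le_refl t⟩
  · have hrev : ∀ (p p' : ℝ → ℝ), (∀ r, HasDerivAt p (p' r) r) →
        ∀ r : ℝ, HasDerivAt (fun r => p (2 * a - r)) (-(p' (2 * a - r))) r := by
      intro p p' hp r
      have inner : HasDerivAt (fun r : ℝ => 2 * a - r) (-1) r := by
        simpa using (hasDerivAt_const r (2 * a)).fun_sub (hasDerivAt_id r)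
      simpa [Function.comp_def] using (hp (2 * a - r)).comp r inner
    have key := ode_unique_fwd (fun r => K (2 * a - r))
      (hK.comp (by continuity))
      (fun r => f (2 * a - r)) (fun r => -(f' (2 * a - r)))
      (fun r => g (2 * a - r)) (fun r => -(g' (2 * a - r)))
      (hrev f f' hf)
      (by intro r
          have := (hrev f' (fun t => -(K t) * f t) hf' r).fun_neg
          simpa [neg_mul] using this)
      (hrev g g' hg)
      (by intro r
          have := (hrev g' (fun t => -(K t) * g t) hg' r).fun_neg
          simpa [neg_mul] using this)
      a (by beta_reduce; rw [show 2 * a - a = a by ring]; exact hfa)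
      (by beta_reduce; rw [show 2 * a - a = a by ring, hfa'])
      (2 * a - t) (by linarith) (2 * a - t) ⟨by linarith, le_refl _⟩
    simp only [sub_sub_cancel] at key
    exact ⟨key.1, neg_injective key.2⟩

private lemma sol_pos (K : ℝ → ℝ) (y y' : ℝ → ℝ → ℝ) (z : ℝ → ℝ)
    (hy : ∀ s t, HasDerivAt (y s) (y' s t) t)
    (h0 : ∀ s, y s s = 0) (h1 : ∀ s, y' s s = 1)
    (hz : ∀ s, s < z s ∧ y s (z s) = 0 ∧ ∀ t, s < t → t < z s → y s t ≠ 0)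
    (s t : ℝ) (hst : s < t) (htz : t < z s) : 0 < y s t := by
  have hcont : Continuous (y s) := continuous_iff_continuousAt.2 fun r => (hy s r).continuousAt
  have hslope : Filter.Tendsto (slope (y s) s) (nhdsWithin s {s}ᶜ) (nhds 1) := by
    have h := hy s s
    rw [hasDerivAt_iff_tendsto_slope] at h
    simpa [h1 s] using h
  have hslope' : Filter.Tendsto (slope (y s) s) (nhdsWithin s (Ioi s)) (nhds 1) :=
    hslope.mono_left (nhdsWithin_mono s (fun x hx => ne_of_gt hx))
  have hev : ∀ᶠ r in nhdsWithin s (Ioi s), 0 < slope (y s) s r :=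
    hslope'.eventually (eventually_gt_nhds one_pos)
  have hIoo : Ioo s t ∈ nhdsWithin s (Ioi s) := Ioo_mem_nhdsGT_of_mem ⟨le_refl s, hst⟩
  obtain ⟨t₀, hpos, ht₀⟩ := (hev.and (Filter.eventually_of_mem hIoo fun x hx => hx)).exists
  have ht₀pos : 0 < y s t₀ := by
    have hs : slope (y s) s t₀ = (y s t₀ - y s s) / (t₀ - s) := slope_def_field _ _ _
    rw [hs, h0 s, sub_zero] at hpos
    have h2 : 0 < t₀ - s := sub_pos.2 ht₀.1
    exact (div_pos_iff.1 hpos).resolve_right (fun h => absurd h.2 (not_lt.2 h2.le)) |>.1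
  by_contra hneg
  have hne : y s t ≠ 0 := (hz s).2.2 t hst htz
  have hlt : y s t < 0 := lt_of_le_of_ne (not_lt.1 hneg) hne
  obtain ⟨x, hx, hx0⟩ := intermediate_value_Ioo' (le_of_lt ht₀.2) hcont.continuousOn
    (show (0:ℝ) ∈ Ioo (y s t) (y s t₀) from ⟨hlt, ht₀pos⟩)
  exact (hz s).2.2 x (lt_trans ht₀.1 hx.1) (lt_trans hx.2 htz) hx0

private lemma deriv_at_zero_neg (K : ℝ → ℝ) (hK : Continuous K) (y y' : ℝ → ℝ → ℝ) (z : ℝ → ℝ)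
    (hy : ∀ s t, HasDerivAt (y s) (y' s t) t)
    (hy' : ∀ s t, HasDerivAt (y' s) (-(K t) * y s t) t)
    (h0 : ∀ s, y s s = 0) (h1 : ∀ s, y' s s = 1)
    (hz : ∀ s, s < z s ∧ y s (z s) = 0 ∧ ∀ t, s < t → t < z s → y s t ≠ 0)
    (s : ℝ) : y' s (z s) < 0 := by
  have hne : y' s (z s) ≠ 0 := by
    intro h
    have key := ode_unique K hK (y s) (y' s) (fun _ => 0) (fun _ => 0)
      (hy s) (hy' s) (fun t => hasDerivAt_const t 0)
      (fun t => by simpa using hasDerivAt_const t (0:ℝ))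
      (z s) (hz s).2.1 h s
    rw [h1 s] at key
    exact one_ne_zero key.2
  have hle : y' s (z s) ≤ 0 := by
    have h := hy s (z s)
    rw [hasDerivAt_iff_tendsto_slope] at h
    have h' : Filter.Tendsto (slope (y s) (z s)) (nhdsWithin (z s) (Iio (z s)))
        (nhds (y' s (z s))) :=
      h.mono_left (nhdsWithin_mono _ (fun x hx => ne_of_lt hx))
    have hIoo : Ioo s (z s) ∈ nhdsWithin (z s) (Iio (z s)) :=
      Ioo_mem_nhdsLT_of_mem ⟨(hz s).1, le_refl _⟩
    refine le_of_tendsto h' (Filter.eventually_of_mem hIoo fun x hx => ?_)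
    have hyx : 0 < y s x := sol_pos K y y' z hy h0 h1 hz s x hx.1 hx.2
    have hs : slope (y s) (z s) x = (y s x - y s (z s)) / (x - z s) := slope_def_field _ _ _
    rw [hs, (hz s).2.1, sub_zero]
    exact le_of_lt (div_neg_of_pos_of_neg hyx (sub_neg.2 hx.2))
  exact lt_of_le_of_ne hle hne

private lemma joint_cont (K : ℝ → ℝ) (hK : Continuous K) (y y' : ℝ → ℝ → ℝ) (z : ℝ → ℝ)
    (hy : ∀ s t, HasDerivAt (y s) (y' s t) t)
    (hy' : ∀ s t, HasDerivAt (y' s) (-(K t) * y s t) t)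
    (h0 : ∀ s, y s s = 0) (h1 : ∀ s, y' s s = 1)
    (hz : ∀ s, s < z s ∧ y s (z s) = 0 ∧ ∀ t, s < t → t < z s → y s t ≠ 0) :
    Continuous (fun p : ℝ × ℝ => y p.1 p.2) ∧ Continuous (fun p : ℝ × ℝ => y' p.1 p.2) := by
  set c : ℝ := z 0 / 2 with hc
  have hc0 : 0 < c := half_pos (hz 0).1
  have hcz : c < z 0 := half_lt_self (hz 0).1
  have hW : y 0 c ≠ 0 := (hz 0).2.2 c hc0 hcz
  set W : ℝ := y 0 c with hWdef
  -- Wronskian of y 0 and y c is constant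
  set w : ℝ → ℝ := fun t => y 0 t * y' c t - y c t * y' 0 t with hwdef
  have hwd : ∀ t, HasDerivAt w 0 t := by
    intro t
    have h := ((hy 0 t).fun_mul (hy' c t)).fun_sub ((hy c t).fun_mul (hy' 0 t))
    convert! h using 1
    ring
  have hwconst : ∀ t, w t = w c := fun t =>
    is_const_of_deriv_eq_zero (fun x => (hwd x).differentiableAt) (fun x => (hwd x).deriv) t c
  have hwc : w c = W := by
    simp [hwdef, h0 c, h1 c, hWdef]
  set Y : ℝ → ℝ → ℝ := fun s t => (y 0 s * y c t - y c s * y 0 t) / W with hYdef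
  set Y' : ℝ → ℝ → ℝ := fun s t => (y 0 s * y' c t - y c s * y' 0 t) / W with hY'def
  have hYd : ∀ s t, HasDerivAt (Y s) (Y' s t) t := fun s t =>
    (((hy c t).const_mul (y 0 s)).sub ((hy 0 t).const_mul (y c s))).div_const W
  have hY'd : ∀ s t, HasDerivAt (Y' s) (-(K t) * Y s t) t := by
    intro s t
    have h := (((hy' c t).const_mul (y 0 s)).fun_sub ((hy' 0 t).const_mul (y c s))).div_const W
    convert! h using 1
    simp only [hYdef]; field_simp
    ring_nf
  have hY0 : ∀ s, Y s s = 0 := by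
    intro s
    have : y 0 s * y c s - y c s * y 0 s = 0 := by ring
    simp [hYdef, this]
  have hY1 : ∀ s, Y' s s = 1 := by
    intro s
    have h : Y' s s = w s / W := by simp [hY'def, hwdef]
    rw [h, hwconst s, hwc, div_self hW]
  have heq : ∀ s t, y s t = Y s t ∧ y' s t = Y' s t := fun s t =>
    ode_unique K hK (y s) (y' s) (Y s) (Y' s) (hy s) (hy' s) (hYd s) (hY'd s) s
      (by rw [h0 s, hY0 s]) (by rw [h1 s, hY1 s]) t
  have hu : Continuous (y 0) := continuous_iff_continuousAt.2 fun r => (hy 0 r).continuousAt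
  have hv : Continuous (y c) := continuous_iff_continuousAt.2 fun r => (hy c r).continuousAt
  have hu' : Continuous (y' 0) := continuous_iff_continuousAt.2 fun r => (hy' 0 r).continuousAt
  have hv' : Continuous (y' c) := continuous_iff_continuousAt.2 fun r => (hy' c r).continuousAt
  constructor
  · have : (fun p : ℝ × ℝ => y p.1 p.2) = fun p : ℝ × ℝ => Y p.1 p.2 :=
      funext fun p => (heq p.1 p.2).1
    rw [this]
    exact (((hu.comp continuous_fst).mul (hv.comp continuous_snd)).sub
      ((hv.comp continuous_fst).mul (hu.comp continuous_snd))).div_const W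
  · have : (fun p : ℝ × ℝ => y' p.1 p.2) = fun p : ℝ × ℝ => Y' p.1 p.2 :=
      funext fun p => (heq p.1 p.2).2
    rw [this]
    exact (((hu.comp continuous_fst).mul (hv'.comp continuous_snd)).sub
      ((hv.comp continuous_fst).mul (hu'.comp continuous_snd))).div_const W

private lemma z_cont (K : ℝ → ℝ) (hK : Continuous K) (y y' : ℝ → ℝ → ℝ) (z : ℝ → ℝ)
    (hy : ∀ s t, HasDerivAt (y s) (y' s t) t)
    (hy' : ∀ s t, HasDerivAt (y' s) (-(K t) * y s t) t)
    (h0 : ∀ s, y s s = 0) (h1 : ∀ s, y' s s = 1)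
    (hz : ∀ s, s < z s ∧ y s (z s) = 0 ∧ ∀ t, s < t → t < z s → y s t ≠ 0) :
    Continuous z := by
  obtain ⟨hYc, hY'c⟩ := joint_cont K hK y y' z hy hy' h0 h1 hz
  rw [continuous_iff_continuousAt]
  intro s₀
  rw [Metric.continuousAt_iff]
  intro ε hε
  set z₀ : ℝ := z s₀ with hz₀def
  have hsz : s₀ < z₀ := (hz s₀).1
  set β : ℝ := min ε ((z₀ - s₀) / 2) with hβdef
  have hβpos : 0 < β := lt_min hε (by linarith)
  have hβε : β ≤ ε := min_le_left _ _
  have hβz : β ≤ (z₀ - s₀) / 2 := min_le_right _ _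
  set tm : ℝ := z₀ - β / 2 with htmdef
  have htm1 : s₀ < tm := by simp only [htmdef]; linarith
  have htm2 : tm < z₀ := by simp only [htmdef]; linarith
  have hytm : 0 < y s₀ tm := sol_pos K y y' z hy h0 h1 hz s₀ tm htm1 htm2
  -- a point tp just after z₀ where y s₀ is negative
  have hd : y' s₀ z₀ < 0 := deriv_at_zero_neg K hK y y' z hy hy' h0 h1 hz s₀
  obtain ⟨tp, htpslope, htpmem⟩ : ∃ tp, slope (y s₀) z₀ tp < 0 ∧ tp ∈ Ioo z₀ (z₀ + β / 2) := by
    have h := hy s₀ z₀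
    rw [hasDerivAt_iff_tendsto_slope] at h
    have h' : Filter.Tendsto (slope (y s₀) z₀) (nhdsWithin z₀ (Ioi z₀)) (nhds (y' s₀ z₀)) :=
      h.mono_left (nhdsWithin_mono _ (fun x hx => ne_of_gt hx))
    have hev : ∀ᶠ r in nhdsWithin z₀ (Ioi z₀), slope (y s₀) z₀ r < 0 :=
      h'.eventually (eventually_lt_nhds hd)
    have hIoo : Ioo z₀ (z₀ + β / 2) ∈ nhdsWithin z₀ (Ioi z₀) :=
      Ioo_mem_nhdsGT_of_mem ⟨le_refl _, by linarith⟩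
    exact (hev.and (Filter.eventually_of_mem hIoo fun x hx => hx)).exists
  have hytp : y s₀ tp < 0 := by
    have hs : slope (y s₀) z₀ tp = (y s₀ tp - y s₀ z₀) / (tp - z₀) := slope_def_field _ _ _
    rw [hs, show y s₀ z₀ = 0 from (hz s₀).2.1, sub_zero] at htpslope
    have h2 : 0 < tp - z₀ := sub_pos.2 htpmem.1
    rcases div_neg_iff.1 htpslope with ⟨hn, hd'⟩ | ⟨hn, hd'⟩
    · linarith
    · exact hn
  -- near-diagonal positivity radius r
  obtain ⟨r, hrpos, hr⟩ : ∃ r > 0, ∀ s t : ℝ, |s - s₀| < r → |t - s₀| < r → s < t → 0 < y s t := by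
    have hUopen : IsOpen {p : ℝ × ℝ | 0 < y' p.1 p.2} := isOpen_lt continuous_const hY'c
    have hmem : ((s₀, s₀) : ℝ × ℝ) ∈ {p : ℝ × ℝ | 0 < y' p.1 p.2} := by
      simp [h1 s₀]
    obtain ⟨r, hrpos, hrball⟩ := Metric.isOpen_iff.1 hUopen _ hmem
    refine ⟨r, hrpos, fun s t hs ht hst => ?_⟩
    obtain ⟨ξ, hξ, hξs⟩ := exists_hasDerivAt_eq_slope (y s) (y' s) hst
      (continuous_iff_continuousAt.2 fun u => (hy s u).continuousAt).continuousOn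
      (fun u _ => hy s u)
    have hξball : (s, ξ) ∈ Metric.ball ((s₀, s₀) : ℝ × ℝ) r := by
      rw [Metric.mem_ball, Prod.dist_eq]
      rw [abs_lt] at hs ht
      refine max_lt ?_ ?_
      · rw [Real.dist_eq, abs_lt]; constructor <;> linarith
      · rw [Real.dist_eq, abs_lt]
        constructor <;> nlinarith [hξ.1, hξ.2]
    have hpos : 0 < y' s ξ := hrball hξball
    rw [hξs] at hpos
    rw [h0 s, sub_zero] at hpos
    have h2 : 0 < t - s := sub_pos.2 hst
    rcases div_pos_iff.1 hpos with ⟨hn, _⟩ | ⟨_, hd''⟩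
    · exact hn
    · linarith
  set m : ℝ := min (r / 2) ((tm - s₀) / 2) with hmdef
  have hmpos : 0 < m := lt_min (by linarith) (by linarith)
  have hmtm : s₀ + m ≤ tm := by
    have := min_le_right (r / 2) ((tm - s₀) / 2)
    simp only [hmdef]; linarith [this]
  have hmr : m ≤ r / 2 := min_le_left _ _
  -- tube lemma
  have hNopen : IsOpen {p : ℝ × ℝ | y p.1 p.2 ≠ 0} := by
    have : {p : ℝ × ℝ | y p.1 p.2 ≠ 0} = (fun p : ℝ × ℝ => y p.1 p.2) ⁻¹' ({0}ᶜ) := rfl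
    rw [this]
    exact isOpen_compl_singleton.preimage hYc
  have hsub : {s₀} ×ˢ Icc (s₀ + m) tm ⊆ {p : ℝ × ℝ | y p.1 p.2 ≠ 0} := by
    rintro ⟨a, b⟩ ⟨ha, hb⟩
    simp only [mem_singleton_iff] at ha
    simp only [mem_setOf_eq]
    rw [ha]
    simp only [mem_Icc] at hb
    have h1' : s₀ < b := lt_of_lt_of_le (by linarith) hb.1
    have h2' : b < z₀ := lt_of_le_of_lt hb.2 htm2
    exact ne_of_gt (sol_pos K y y' z hy h0 h1 hz s₀ b h1' h2')
  obtain ⟨u, v, huo, hvo, hsu, hav, huv⟩ := generalized_tube_lemma isCompact_singleton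
    isCompact_Icc hNopen hsub
  obtain ⟨r₁, hr₁pos, hr₁⟩ := Metric.isOpen_iff.1 huo s₀ (hsu rfl)
  -- continuity at the two test points
  obtain ⟨r₂, hr₂pos, hr₂⟩ : ∃ r₂ > 0, ∀ s, |s - s₀| < r₂ → 0 < y s tm := by
    have hopen : IsOpen {s : ℝ | 0 < y s tm} :=
      isOpen_lt continuous_const (hYc.comp (continuous_id.prodMk continuous_const))
    obtain ⟨r₂, hpos, hball⟩ := Metric.isOpen_iff.1 hopen s₀ hytm
    exact ⟨r₂, hpos, fun s hs => hball (by rwa [Metric.mem_ball, Real.dist_eq])⟩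
  obtain ⟨r₃, hr₃pos, hr₃⟩ : ∃ r₃ > 0, ∀ s, |s - s₀| < r₃ → y s tp < 0 := by
    have hopen : IsOpen {s : ℝ | y s tp < 0} :=
      isOpen_lt (hYc.comp (continuous_id.prodMk continuous_const)) continuous_const
    obtain ⟨r₃, hpos, hball⟩ := Metric.isOpen_iff.1 hopen s₀ hytp
    exact ⟨r₃, hpos, fun s hs => hball (by rwa [Metric.mem_ball, Real.dist_eq])⟩
  set d : ℝ := min (min (r / 2) r₁) (min (min r₂ r₃) m) with hddef
  have hdpos : 0 < d := lt_min (lt_min (by linarith) hr₁pos) (lt_min (lt_min hr₂pos hr₃pos) hmpos)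
  refine ⟨d, hdpos, fun {s} hs => ?_⟩
  rw [Real.dist_eq] at hs ⊢
  have hdr : d ≤ r / 2 := le_trans (min_le_left _ _) (min_le_left _ _)
  have hdr₁ : d ≤ r₁ := le_trans (min_le_left _ _) (min_le_right _ _)
  have hdr₂ : d ≤ r₂ := le_trans (min_le_right _ _) (le_trans (min_le_left _ _) (min_le_left _ _))
  have hdr₃ : d ≤ r₃ := le_trans (min_le_right _ _) (le_trans (min_le_left _ _) (min_le_right _ _))
  have hdm : d ≤ m := le_trans (min_le_right _ _) (min_le_right _ _)
  have habs := abs_lt.1 hs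
  have hstm : s < tm := by linarith [hmtm]
  -- upper bound : z s < z₀ + ε
  have hupper : z s < z₀ + ε := by
    have hy1 : 0 < y s tm := hr₂ s (by linarith)
    have hy2 : y s tp < 0 := hr₃ s (by linarith)
    have hcont : Continuous (y s) := continuous_iff_continuousAt.2 fun u => (hy s u).continuousAt
    obtain ⟨x, hx, hx0⟩ := intermediate_value_Ioo' (le_of_lt (lt_trans htm2 htpmem.1))
      hcont.continuousOn (show (0:ℝ) ∈ Ioo (y s tp) (y s tm) from ⟨hy2, hy1⟩)
    have hzs : z s ≤ x := by
      by_contra hcon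
      exact (hz s).2.2 x (lt_trans hstm hx.1) (not_le.1 hcon) hx0
    calc z s ≤ x := hzs
      _ < tp := hx.2
      _ < z₀ + β / 2 := htpmem.2
      _ ≤ z₀ + ε := by linarith
  -- lower bound : z₀ - ε < z s
  have hlower : z₀ - ε < z s := by
    have htmzs : tm < z s := by
      by_contra hcon
      push_neg at hcon
      set t := z s with htdef
      have hst : s < t := (hz s).1
      have hyt : y s t = 0 := (hz s).2.1
      rcases le_or_gt t (s₀ + m) with hcase | hcase
      · have : 0 < y s t := by
          refine hr s t (by linarith) ?_ hst
          rw [abs_lt]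
          constructor
          · linarith
          · linarith [hmr]
        linarith [this, hyt.ge, this.ne']
      · have htA : t ∈ Icc (s₀ + m) tm := ⟨le_of_lt hcase, hcon⟩
        have : (s, t) ∈ u ×ˢ v := by
          refine ⟨hr₁ ?_, hav htA⟩
          rw [Metric.mem_ball, Real.dist_eq]
          linarith
        exact (huv this) hyt
    calc z₀ - ε ≤ z₀ - β := by linarith
      _ < tm := by simp only [htmdef]; linarith
      _ < z s := htmzs
  rw [abs_lt]
  constructor <;> linarith

private lemma z_periodic (L : ℝ) (K : ℝ → ℝ) (hK : Continuous K)
    (hKper : ∀ t, K (t + L) = K t) (y y' : ℝ → ℝ → ℝ) (z : ℝ → ℝ)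
    (hy : ∀ s t, HasDerivAt (y s) (y' s t) t)
    (hy' : ∀ s t, HasDerivAt (y' s) (-(K t) * y s t) t)
    (h0 : ∀ s, y s s = 0) (h1 : ∀ s, y' s s = 1)
    (hz : ∀ s, s < z s ∧ y s (z s) = 0 ∧ ∀ t, s < t → t < z s → y s t ≠ 0)
    (s : ℝ) : z (s + L) = z s + L := by
  have inner : ∀ t : ℝ, HasDerivAt (fun r : ℝ => r + L) 1 t := fun t => by
    simpa using (hasDerivAt_id t).add_const L
  have hshift : ∀ t, y s t = y (s + L) (t + L) := by
    intro t
    refine (ode_unique K hK (y s) (y' s)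
      (fun t => y (s + L) (t + L)) (fun t => y' (s + L) (t + L)) (hy s) (hy' s)
      (fun t => by simpa [Function.comp_def] using (hy (s + L) (t + L)).comp t (inner t))
      (fun t => by
        have h := (hy' (s + L) (t + L)).comp t (inner t)
        simpa [hKper t, Function.comp_def] using h)
      s (by simp [h0]) (by simp [h1]) t).1
  have h1' : s < z (s + L) - L := by linarith [(hz (s + L)).1]
  have h2' : y s (z (s + L) - L) = 0 := by
    rw [hshift (z (s + L) - L), show z (s + L) - L + L = z (s + L) by ring]
    exact (hz (s + L)).2.1
  rcases lt_trichotomy (z (s + L) - L) (z s) with hlt | heq | hgt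
  · exact absurd h2' ((hz s).2.2 _ h1' hlt)
  · linarith
  · exfalso
    have h3' : y (s + L) (z s + L) = 0 := by rw [← hshift (z s)]; exact (hz s).2.1
    exact (hz (s + L)).2.2 (z s + L) (by linarith [(hz s).1]) (by linarith) h3'

private lemma exists_lt_interval (K1 K2 : ℝ → ℝ) (hK1 : Continuous K1) (hK2 : Continuous K2)
    (hle : ∀ t, K1 t ≤ K2 t)
    (hacc : ∀ x : ℝ, ¬ AccPt x (Filter.principal {t : ℝ | K1 t = K2 t}))
    (a b : ℝ) (hab : a < b) :
    ∃ a' b', a ≤ a' ∧ a' < b' ∧ b' ≤ b ∧ ∀ t ∈ Icc a' b', K1 t < K2 t := by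
  obtain ⟨t0, ht0mem, ht0⟩ : ∃ t0 ∈ Ioo a b, K1 t0 ≠ K2 t0 := by
    by_contra hcon
    push_neg at hcon
    refine hacc ((a + b) / 2) ?_
    rw [accPt_iff_nhds]
    intro U hU
    have hUI : U ∩ Ioo a b ∈ nhds ((a + b) / 2) :=
      Filter.inter_mem hU (isOpen_Ioo.mem_nhds (by constructor <;> linarith))
    obtain ⟨c, d, hcd, hsub⟩ := mem_nhds_iff_exists_Ioo_subset.1 hUI
    set x : ℝ := (a + b) / 2
    have hy : (x + d) / 2 ∈ Ioo c d := ⟨by linarith [hcd.1, hcd.2], by linarith [hcd.2]⟩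
    exact ⟨(x + d) / 2, ⟨(hsub hy).1, hcon _ (hsub hy).2⟩, ne_of_gt (by linarith [hcd.2])⟩
  have ht0lt : K1 t0 < K2 t0 := lt_of_le_of_ne (hle t0) ht0
  have hopen : IsOpen ({t : ℝ | K1 t < K2 t} ∩ Ioo a b) :=
    (isOpen_lt hK1 hK2).inter isOpen_Ioo
  obtain ⟨r, hrpos, hball⟩ := Metric.isOpen_iff.1 hopen t0 ⟨ht0lt, ht0mem⟩
  have hIccsub : Icc (t0 - r / 2) (t0 + r / 2) ⊆ {t : ℝ | K1 t < K2 t} ∩ Ioo a b := by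
    intro t ht
    apply hball
    rw [Metric.mem_ball, Real.dist_eq, abs_lt]
    rcases ht with ⟨h1, h2⟩
    constructor <;> linarith
  refine ⟨t0 - r / 2, t0 + r / 2, ?_, by linarith, ?_, fun t ht => (hIccsub ht).1⟩
  · have := (hIccsub (left_mem_Icc.2 (by linarith))).2.1; linarith
  · have := (hIccsub (right_mem_Icc.2 (by linarith))).2.2; linarith

private lemma sturm (K1 K2 : ℝ → ℝ) (hK1 : Continuous K1) (hK2 : Continuous K2)
    (hle : ∀ t, K1 t ≤ K2 t)
    (hacc : ∀ x : ℝ, ¬ AccPt x (Filter.principal {t : ℝ | K1 t = K2 t}))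
    (y1 y1' y2 y2' : ℝ → ℝ → ℝ)
    (hy1 : ∀ s t, HasDerivAt (y1 s) (y1' s t) t)
    (hy1' : ∀ s t, HasDerivAt (y1' s) (-(K1 t) * y1 s t) t)
    (hy2 : ∀ s t, HasDerivAt (y2 s) (y2' s t) t)
    (hy2' : ∀ s t, HasDerivAt (y2' s) (-(K2 t) * y2 s t) t)
    (h10 : ∀ s, y1 s s = 0) (h11 : ∀ s, y1' s s = 1)
    (h20 : ∀ s, y2 s s = 0) (h21 : ∀ s, y2' s s = 1)
    (z1 z2 : ℝ → ℝ)
    (hz1 : ∀ s, s < z1 s ∧ y1 s (z1 s) = 0 ∧ ∀ t, s < t → t < z1 s → y1 s t ≠ 0)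
    (hz2 : ∀ s, s < z2 s ∧ y2 s (z2 s) = 0 ∧ ∀ t, s < t → t < z2 s → y2 s t ≠ 0)
    (s : ℝ) : z2 s < z1 s := by
  by_contra hcon
  push_neg at hcon
  set Z : ℝ := z1 s with hZdef
  have hsZ : s < Z := (hz1 s).1
  have hy1pos : ∀ t, s < t → t < Z → 0 < y1 s t := fun t h1 h2 =>
    sol_pos K1 y1 y1' z1 hy1 h10 h11 hz1 s t h1 h2
  have hy2pos : ∀ t, s < t → t < Z → 0 < y2 s t := fun t h1 h2 =>
    sol_pos K2 y2 y2' z2 hy2 h20 h21 hz2 s t h1 (lt_of_lt_of_le h2 hcon)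
  have hy2Z : 0 ≤ y2 s Z := by
    rcases eq_or_lt_of_le hcon with heq | hlt
    · rw [heq]; exact le_of_eq (hz2 s).2.1.symm
    · exact le_of_lt (sol_pos K2 y2 y2' z2 hy2 h20 h21 hz2 s Z hsZ hlt)
  have hy1'Z : y1' s Z < 0 := deriv_at_zero_neg K1 hK1 y1 y1' z1 hy1 hy1' h10 h11 hz1 s
  set w : ℝ → ℝ := fun t => y1 s t * y2' s t - y2 s t * y1' s t with hwdef
  have hwd : ∀ t, HasDerivAt w ((K1 t - K2 t) * (y1 s t * y2 s t)) t := by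
    intro t
    have h := ((hy1 s t).fun_mul (hy2' s t)).fun_sub ((hy2 s t).fun_mul (hy1' s t))
    convert! h using 1
    ring
  have hws : w s = 0 := by simp [hwdef, h10 s, h20 s]
  have hwZ : 0 ≤ w Z := by
    have h : w Z = -(y2 s Z * y1' s Z) := by
      simp [hwdef, hZdef, (hz1 s).2.1]
    rw [h]
    exact neg_nonneg.2 (mul_nonpos_of_nonneg_of_nonpos hy2Z (le_of_lt hy1'Z))
  have hanti : AntitoneOn w (Icc s Z) := by
    apply antitoneOn_of_deriv_nonpos (convex_Icc s Z)
    · exact fun t _ => (hwd t).continuousAt.continuousWithinAt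
    · exact fun t _ => (hwd t).differentiableAt.differentiableWithinAt
    · intro t ht
      rw [interior_Icc] at ht
      rw [(hwd t).deriv]
      exact mul_nonpos_of_nonpos_of_nonneg (by linarith [hle t])
        (le_of_lt (mul_pos (hy1pos t ht.1 ht.2) (hy2pos t ht.1 ht.2)))
  obtain ⟨a', b', ha', hab', hb', hKlt⟩ :=
    exists_lt_interval K1 K2 hK1 hK2 hle hacc s Z hsZ
  have hstrict : StrictAntiOn w (Icc a' b') := by
    apply strictAntiOn_of_deriv_neg (convex_Icc a' b')
    · exact fun t _ => (hwd t).continuousAt.continuousWithinAt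
    · intro t ht
      rw [interior_Icc] at ht
      rw [(hwd t).deriv]
      have h1 : s < t := lt_of_le_of_lt ha' ht.1
      have h2 : t < Z := lt_of_lt_of_le ht.2 hb'
      exact mul_neg_of_neg_of_pos (by linarith [hKlt t ⟨le_of_lt ht.1, le_of_lt ht.2⟩])
        (mul_pos (hy1pos t h1 h2) (hy2pos t h1 h2))
  have c1 : w Z ≤ w b' := hanti ⟨le_trans ha' (le_of_lt hab'), hb'⟩ (right_mem_Icc.2 (le_of_lt hsZ)) hb'
  have c2 : w b' < w a' := hstrict (left_mem_Icc.2 (le_of_lt hab')) (right_mem_Icc.2 (le_of_lt hab')) hab'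
  have c3 : w a' ≤ w s := hanti (left_mem_Icc.2 (le_of_lt hsZ)) ⟨ha', le_trans (le_of_lt hab') hb'⟩ ha'
  linarith [hwZ, c1, c2, c3, hws]



/-- uniform ratio for distances to first conjugate points,
from the proof of Lemma 8.3.  With `K1, K2` continuous, `L`-periodic,
`δ² ≤ K1 ≤ K2`, equality only on a set with no accumulation point, and
`z j s` the least zero in `(s, ∞)` of the solution of `y'' + K_j y = 0` with
`y s = 0`, `y' s = 1`, the functions `d j s = z j s - s` are positive,
continuous and `L`-periodic, and there is `ρ ∈ (0,1)` with
`d2 s ≤ ρ * d1 s` for all `s`. -/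
theorem conjugate_distance_uniform_ratio
    (L δ : ℝ) (hL : 0 < L) (hδ : 0 < δ)
    (K1 K2 : ℝ → ℝ) (hK1 : Continuous K1) (hK2 : Continuous K2)
    (hK1per : ∀ t : ℝ, K1 (t + L) = K1 t) (hK2per : ∀ t : ℝ, K2 (t + L) = K2 t)
    (hlb : ∀ t : ℝ, δ ^ 2 ≤ K1 t) (hle : ∀ t : ℝ, K1 t ≤ K2 t)
    (hacc : ∀ x : ℝ, ¬ AccPt x (Filter.principal {t : ℝ | K1 t = K2 t}))
    (y1 y1' y2 y2' : ℝ → ℝ → ℝ)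
    (hy1 : ∀ s t : ℝ, HasDerivAt (y1 s) (y1' s t) t)
    (hy1' : ∀ s t : ℝ, HasDerivAt (y1' s) (-(K1 t) * y1 s t) t)
    (hy2 : ∀ s t : ℝ, HasDerivAt (y2 s) (y2' s t) t)
    (hy2' : ∀ s t : ℝ, HasDerivAt (y2' s) (-(K2 t) * y2 s t) t)
    (h10 : ∀ s : ℝ, y1 s s = 0) (h11 : ∀ s : ℝ, y1' s s = 1)
    (h20 : ∀ s : ℝ, y2 s s = 0) (h21 : ∀ s : ℝ, y2' s s = 1)
    (z1 z2 : ℝ → ℝ)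
    (hz1 : ∀ s : ℝ, s < z1 s ∧ y1 s (z1 s) = 0 ∧ ∀ t : ℝ, s < t → t < z1 s → y1 s t ≠ 0)
    (hz2 : ∀ s : ℝ, s < z2 s ∧ y2 s (z2 s) = 0 ∧ ∀ t : ℝ, s < t → t < z2 s → y2 s t ≠ 0) :
    (∀ s : ℝ, 0 < z1 s - s) ∧ (∀ s : ℝ, 0 < z2 s - s) ∧
    Continuous (fun s : ℝ => z1 s - s) ∧ Continuous (fun s : ℝ => z2 s - s) ∧
    (∀ s : ℝ, z1 (s + L) - (s + L) = z1 s - s) ∧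
    (∀ s : ℝ, z2 (s + L) - (s + L) = z2 s - s) ∧
    ∃ ρ : ℝ, 0 < ρ ∧ ρ < 1 ∧ ∀ s : ℝ, z2 s - s ≤ ρ * (z1 s - s) := by
  have pos1 : ∀ s : ℝ, 0 < z1 s - s := fun s => sub_pos.2 (hz1 s).1
  have pos2 : ∀ s : ℝ, 0 < z2 s - s := fun s => sub_pos.2 (hz2 s).1
  have cont1 : Continuous z1 := z_cont K1 hK1 y1 y1' z1 hy1 hy1' h10 h11 hz1
  have cont2 : Continuous z2 := z_cont K2 hK2 y2 y2' z2 hy2 hy2' h20 h21 hz2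
  have contd1 : Continuous (fun s : ℝ => z1 s - s) := cont1.sub continuous_id
  have contd2 : Continuous (fun s : ℝ => z2 s - s) := cont2.sub continuous_id
  have per1 : ∀ s : ℝ, z1 (s + L) - (s + L) = z1 s - s := fun s => by
    rw [z_periodic L K1 hK1 hK1per y1 y1' z1 hy1 hy1' h10 h11 hz1 s]; ring
  have per2 : ∀ s : ℝ, z2 (s + L) - (s + L) = z2 s - s := fun s => by
    rw [z_periodic L K2 hK2 hK2per y2 y2' z2 hy2 hy2' h20 h21 hz2 s]; ring
  have hlt : ∀ s : ℝ, z2 s - s < z1 s - s := fun s => by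
    have := sturm K1 K2 hK1 hK2 hle hacc y1 y1' y2 y2' hy1 hy1' hy2 hy2'
      h10 h11 h20 h21 z1 z2 hz1 hz2 s
    linarith
  refine ⟨pos1, pos2, contd1, contd2, per1, per2, ?_⟩
  set f : ℝ → ℝ := fun s => (z2 s - s) / (z1 s - s) with hfdef
  have hfc : Continuous f := contd2.div contd1 (fun s => (pos1 s).ne')
  obtain ⟨sm, hsmmem, hmax⟩ := isCompact_Icc.exists_isMaxOn (α := ℝ) (s := Icc (0:ℝ) L)
    (nonempty_Icc.2 (le_of_lt hL)) hfc.continuousOn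
  have hfper : Function.Periodic f L := by
    intro x
    simp only [hfdef, per1 x, per2 x]
  refine ⟨f sm, div_pos (pos2 sm) (pos1 sm), (div_lt_one (pos1 sm)).2 (hlt sm), fun s => ?_⟩
  have hfs : f (toIcoMod hL 0 s) = f s := by
    have h : toIcoMod hL 0 s = s - toIcoDiv hL 0 s • L := rfl
    rw [h, hfper.sub_zsmul_eq]
  have hmem : toIcoMod hL 0 s ∈ Icc 0 L := by
    have := toIcoMod_mem_Ico hL 0 s
    rw [zero_add] at this
    exact Ico_subset_Icc_self this
  have hle' : f s ≤ f sm := by rw [← hfs]; exact hmax hmem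
  have := (div_le_iff₀ (pos1 s)).1 hle'
  calc z2 s - s = f s * (z1 s - s) := by
        rw [hfdef]
        rw [div_mul_cancel₀ _ (pos1 s).ne']
    _ ≤ f sm * (z1 s - s) := mul_le_mul_of_nonneg_right hle' (le_of_lt (pos1 s))
end

section
/- Let n ≥ 1, ℓ > 0, δ > 0. Let A : [0, δ) × [0, ℓ] → M_{2n}(ℝ), (s, t) ↦ A_s(t), be continuous and continuously differentiable in s, with A_s(t)ᵀ·J + J·A_s(t) = 0 for all (s, t). For each s let X_s : [0, ℓ] → M_{2n}(ℝ) be the solution of ∂_t X_s(t) = A_s(t)·X_s(t) with X_s(0) = I. Then J · X_0(ℓ)⁻¹ · (∂_s X_s(ℓ))|_{s=0} = ∫_0^ℓ X_0(t)ᵀ · ( J · (∂_s A_s(t))|_{s=0} ) · X_0(t) dt. -/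
open Matrix

/-- The standard symplectic matrix `J = [[0, -I],[I, 0]]` in `n × n` block form. -/
def stdSymplecticJ (n : ℕ) : Matrix (Fin n ⊕ Fin n) (Fin n ⊕ Fin n) ℝ :=
  Matrix.fromBlocks 0 (-1) 1 0

section BottAux

open Set intervalIntegral

attribute [local instance] Matrix.normedAddCommGroup Matrix.normedSpace

set_option linter.unusedSectionVars false
set_option maxHeartbeats 2000000

variable {m : Type*} [Fintype m] [DecidableEq m]

def matENormedAddMonoid : ENormedAddMonoid (Matrix m m ℝ) := NormedAddGroup.toENormedAddMonoid

attribute [local instance] matENormedAddMonoid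

lemma matDeriv_iff {F : ℝ → Matrix m m ℝ} {F' : Matrix m m ℝ} {s : Set ℝ} {x : ℝ} :
    HasDerivWithinAt F F' s x ↔ ∀ i j, HasDerivWithinAt (fun u => F u i j) (F' i j) s x := by
  exact (hasDerivWithinAt_pi (φ := F)).trans (forall_congr' fun i => hasDerivWithinAt_pi)

lemma matDeriv_mul {F G : ℝ → Matrix m m ℝ} {F' G' : Matrix m m ℝ} {s : Set ℝ} {x : ℝ}
    (hF : HasDerivWithinAt F F' s x) (hG : HasDerivWithinAt G G' s x) :
    HasDerivWithinAt (fun u => F u * G u) (F' * G x + F x * G') s x := by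
  rw [matDeriv_iff] at *
  intro i j
  have : ∀ u, (F u * G u) i j = ∑ k, F u i k * G u k j := fun u => Matrix.mul_apply
  refine HasDerivWithinAt.congr_deriv
    (HasDerivWithinAt.fun_sum (fun k _ => ((hF i k).mul (hG k j)))) ?_ |>.congr
    (fun u _ => (this u).symm) (this x).symm
  simp [Matrix.add_apply, Matrix.mul_apply, Finset.sum_add_distrib]

lemma mat_norm_mul (A B : Matrix m m ℝ) :
    ‖A * B‖ ≤ (Fintype.card m : ℝ) * ‖A‖ * ‖B‖ := by
  refine (Matrix.norm_le_iff (by positivity)).2 fun i j => ?_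
  rw [Matrix.mul_apply]
  calc ‖∑ k, A i k * B k j‖ ≤ ∑ k, ‖A i k * B k j‖ := norm_sum_le _ _
    _ ≤ ∑ _k : m, ‖A‖ * ‖B‖ := by
        refine Finset.sum_le_sum fun k _ => ?_
        rw [norm_mul]
        exact mul_le_mul (Matrix.norm_entry_le_entrywise_sup_norm A)
          (Matrix.norm_entry_le_entrywise_sup_norm B) (norm_nonneg _) (norm_nonneg _)
    _ = (Fintype.card m : ℝ) * ‖A‖ * ‖B‖ := by
        simp [Finset.sum_const, Finset.card_univ, mul_assoc]

lemma mat_ftc {F G : ℝ → Matrix m m ℝ} {a b : ℝ} (hab : a ≤ b)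
    (hderiv : ∀ t ∈ Icc a b, HasDerivWithinAt F (G t) (Icc a b) t)
    (hGcont : ContinuousOn G (Icc a b)) :
    ∫ t in a..b, G t = F b - F a := by
  have hFc : ContinuousOn F (Icc a b) := fun t ht => (hderiv t ht).continuousWithinAt
  refine integral_eq_sub_of_hasDeriv_right_of_le hab hFc (fun t ht => ?_) ?_
  · exact (((hderiv t (Ioo_subset_Icc_self ht)).hasDerivAt
      (Icc_mem_nhds ht.1 ht.2)).hasDerivWithinAt)
  · exact (hGcont.intervalIntegrable_of_Icc hab)

lemma to_right_deriv {F : ℝ → Matrix m m ℝ} {G : Matrix m m ℝ} {a b t : ℝ}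
    (ht : t ∈ Ico a b) (h : HasDerivWithinAt F G (Icc a b) t) :
    HasDerivWithinAt F G (Ici t) t := by
  refine (h.mono (Icc_subset_Icc ht.1 le_rfl)).mono_of_mem_nhdsWithin ?_
  rw [← Set.Ici_inter_Iic]
  exact Filter.inter_mem self_mem_nhdsWithin (nhdsWithin_le_nhds (Iic_mem_nhds ht.2))

lemma matContOn_mul {α : Type*} [TopologicalSpace α] {f g : α → Matrix m m ℝ} {s : Set α}
    (hf : ContinuousOn f s) (hg : ContinuousOn g s) :
    ContinuousOn (fun t => f t * g t) s :=
  (Continuous.matrix_mul continuous_fst continuous_snd).comp_continuousOn (hf.prodMk hg)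

lemma gb_scale {K ε x : ℝ} : gronwallBound 0 K ε x = ε * gronwallBound 0 K 1 x := by
  rw [gronwallBound, gronwallBound]
  split_ifs <;> ring

lemma gb_mono {K ε x y : ℝ} (hε : 0 ≤ ε) (hK : 0 ≤ K) (hxy : x ≤ y) :
    gronwallBound 0 K ε x ≤ gronwallBound 0 K ε y := by
  rw [gronwallBound, gronwallBound]
  split_ifs with h
  · nlinarith
  · have hK' : 0 < K := lt_of_le_of_ne hK (Ne.symm h)
    have h2 : Real.exp (K * x) ≤ Real.exp (K * y) :=
      Real.exp_le_exp.2 (mul_le_mul_of_nonneg_left hxy hK)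
    have h3 : 0 ≤ ε / K := div_nonneg hε hK
    nlinarith

lemma J_mul_J (n : ℕ) : stdSymplecticJ n * stdSymplecticJ n = -1 := by
  simp [stdSymplecticJ, Matrix.fromBlocks_multiply, ← Matrix.fromBlocks_one,
    Matrix.fromBlocks_neg]

lemma J_det_isUnit (n : ℕ) : IsUnit (stdSymplecticJ n).det := by
  refine Matrix.isUnit_det_of_right_inverse (B := -(stdSymplecticJ n)) ?_
  rw [mul_neg, J_mul_J, neg_neg]

lemma J_norm_le (n : ℕ) : ‖stdSymplecticJ n‖ ≤ 1 := by
  refine (Matrix.norm_le_iff zero_le_one).2 fun i j => ?_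
  rcases i with i | i <;> rcases j with j | j <;>
    simp [stdSymplecticJ, Matrix.fromBlocks, Matrix.one_apply, Matrix.neg_apply] <;>
    split_ifs <;> norm_num

lemma bd3 {N a b c d : ℝ} (hN : 0 ≤ N) (h1 : a ≤ c) (h2 : b ≤ d)
    (hb : 0 ≤ b) (hc : 0 ≤ c) : N * a * b ≤ N * c * d :=
  mul_le_mul (mul_le_mul_of_nonneg_left h1 hN) h2 hb
    (mul_nonneg hN hc)

theorem bott_core
    (n : ℕ) (hn : 1 ≤ n) (ℓ δ : ℝ) (hℓ : 0 < ℓ) (hδ : 0 < δ)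
    (A A' : ℝ → ℝ → Matrix (Fin n ⊕ Fin n) (Fin n ⊕ Fin n) ℝ)
    (X : ℝ → ℝ → Matrix (Fin n ⊕ Fin n) (Fin n ⊕ Fin n) ℝ)
    (DXl : Matrix (Fin n ⊕ Fin n) (Fin n ⊕ Fin n) ℝ)
    (hAcont : ContinuousOn (fun p : ℝ × ℝ => A p.1 p.2) (Set.Ico 0 δ ×ˢ Set.Icc 0 ℓ))
    (hA'cont : ContinuousOn (fun p : ℝ × ℝ => A' p.1 p.2) (Set.Ico 0 δ ×ˢ Set.Icc 0 ℓ))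
    (hAderiv : ∀ s ∈ Set.Ico (0 : ℝ) δ, ∀ t ∈ Set.Icc (0 : ℝ) ℓ, ∀ i j : Fin n ⊕ Fin n,
      HasDerivWithinAt (fun u : ℝ => A u t i j) (A' s t i j) (Set.Ico 0 δ) s)
    (hAsp : ∀ s ∈ Set.Ico (0 : ℝ) δ, ∀ t ∈ Set.Icc (0 : ℝ) ℓ,
      (A s t)ᵀ * stdSymplecticJ n + stdSymplecticJ n * A s t = 0)
    (hX0 : ∀ s ∈ Set.Ico (0 : ℝ) δ, X s 0 = 1)
    (hXode : ∀ s ∈ Set.Ico (0 : ℝ) δ, ∀ t ∈ Set.Icc (0 : ℝ) ℓ, ∀ i j : Fin n ⊕ Fin n,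
      HasDerivWithinAt (fun u : ℝ => X s u i j) ((A s t * X s t) i j) (Set.Icc 0 ℓ) t)
    (hDXl : ∀ i j : Fin n ⊕ Fin n,
      HasDerivWithinAt (fun s : ℝ => X s ℓ i j) (DXl i j) (Set.Ico 0 δ) 0) :
    ∀ i j : Fin n ⊕ Fin n,
      (stdSymplecticJ n * (X 0 ℓ)⁻¹ * DXl) i j
        = ∫ t in (0 : ℝ)..ℓ, ((X 0 t)ᵀ * (stdSymplecticJ n * A' 0 t) * X 0 t) i j := by
  set J := stdSymplecticJ n with hJdef
  have h0δ : (0 : ℝ) ∈ Ico (0 : ℝ) δ := ⟨le_rfl, hδ⟩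
  have hIcc2 : Icc (0 : ℝ) (δ/2) ⊆ Ico (0 : ℝ) δ :=
    fun u hu => ⟨hu.1, lt_of_le_of_lt hu.2 (by linarith)⟩
  have h02 : (0 : ℝ) ∈ Icc (0 : ℝ) (δ/2) := ⟨le_rfl, by linarith⟩
  set K : Set (ℝ × ℝ) := Icc (0 : ℝ) (δ/2) ×ˢ Icc (0 : ℝ) ℓ with hKdef
  have hKcomp : IsCompact K := (isCompact_Icc).prod (isCompact_Icc)
  have hKsub : K ⊆ Ico (0 : ℝ) δ ×ˢ Icc (0 : ℝ) ℓ :=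
    Set.prod_mono hIcc2 (subset_rfl)
  -- matrix-level hypotheses
  have hXode' : ∀ s ∈ Ico (0:ℝ) δ, ∀ t ∈ Icc (0:ℝ) ℓ,
      HasDerivWithinAt (X s) (A s t * X s t) (Icc 0 ℓ) t :=
    fun s hs t ht => matDeriv_iff.2 (hXode s hs t ht)
  have hDXl' : HasDerivWithinAt (fun s => X s ℓ) DXl (Ico 0 δ) 0 := matDeriv_iff.2 hDXl
  have hAderiv' : ∀ s ∈ Ico (0:ℝ) δ, ∀ t ∈ Icc (0:ℝ) ℓ,
      HasDerivWithinAt (fun u => A u t) (A' s t) (Ico 0 δ) s :=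
    fun s hs t ht => matDeriv_iff.2 (hAderiv s hs t ht)
  -- continuity slices
  have hXcont : ∀ s ∈ Ico (0:ℝ) δ, ContinuousOn (X s) (Icc 0 ℓ) :=
    fun s hs t ht => (hXode' s hs t ht).continuousWithinAt
  have hslice : ∀ s ∈ Ico (0:ℝ) δ, ContinuousOn (fun t => A s t) (Icc 0 ℓ) := by
    intro s hs
    have : ContinuousOn (fun t : ℝ => ((s, t) : ℝ × ℝ)) (Icc 0 ℓ) :=
      (Continuous.prodMk_right s).continuousOn
    exact hAcont.comp this (fun t ht => ⟨hs, ht⟩)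
  have hslice' : ∀ s ∈ Ico (0:ℝ) δ, ContinuousOn (fun t => A' s t) (Icc 0 ℓ) := by
    intro s hs
    have : ContinuousOn (fun t : ℝ => ((s, t) : ℝ × ℝ)) (Icc 0 ℓ) :=
      (Continuous.prodMk_right s).continuousOn
    exact hA'cont.comp this (fun t ht => ⟨hs, ht⟩)
  have hsliceu : ∀ t ∈ Icc (0:ℝ) ℓ, ∀ b : ℝ, b ≤ δ/2 → ContinuousOn (fun u => A' u t) (Icc 0 b) := by
    intro t ht b hb
    have : ContinuousOn (fun u : ℝ => ((u, t) : ℝ × ℝ)) (Icc 0 b) :=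
      (continuous_id.prodMk continuous_const).continuousOn
    exact hA'cont.comp this (fun u hu => ⟨hIcc2 ⟨hu.1, le_trans hu.2 hb⟩, ht⟩)
  -- bounds
  set N : ℝ := (Fintype.card (Fin n ⊕ Fin n) : ℝ) with hNdef
  have hN0 : 0 ≤ N := Nat.cast_nonneg _
  have matN : ∀ (P Q : Matrix (Fin n ⊕ Fin n) (Fin n ⊕ Fin n) ℝ),
      ‖P * Q‖ ≤ N * ‖P‖ * ‖Q‖ := fun P Q => by rw [hNdef]; exact mat_norm_mul P Q
  obtain ⟨CA0, hCA0⟩ := hKcomp.exists_bound_of_continuousOn (hAcont.mono hKsub)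
  obtain ⟨CB0, hCB0⟩ := hKcomp.exists_bound_of_continuousOn (hA'cont.mono hKsub)
  set CA : ℝ := max CA0 0 with hCAdef
  set CB : ℝ := max CB0 0 with hCBdef
  have hCAn : 0 ≤ CA := le_max_right _ _
  have hCBn : 0 ≤ CB := le_max_right _ _
  have hCA : ∀ s ∈ Icc (0:ℝ) (δ/2), ∀ t ∈ Icc (0:ℝ) ℓ, ‖A s t‖ ≤ CA :=
    fun s hs t ht => le_trans (hCA0 (s, t) ⟨hs, ht⟩) (le_max_left _ _)
  have hCB : ∀ s ∈ Icc (0:ℝ) (δ/2), ∀ t ∈ Icc (0:ℝ) ℓ, ‖A' s t‖ ≤ CB :=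
    fun s hs t ht => le_trans (hCB0 (s, t) ⟨hs, ht⟩) (le_max_left _ _)
  have hone : ‖(1 : Matrix (Fin n ⊕ Fin n) (Fin n ⊕ Fin n) ℝ)‖ ≤ 1 := by
    refine (Matrix.norm_le_iff zero_le_one).2 fun i j => ?_
    simp [Matrix.one_apply]
    split_ifs <;> norm_num
  -- Gronwall bound on X
  set BX : ℝ := Real.exp (N * CA * ℓ) with hBXdef
  have hBX1 : 1 ≤ BX := by
    rw [hBXdef]
    exact Real.one_le_exp (by positivity)
  have hBX0 : 0 ≤ BX := le_trans zero_le_one hBX1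
  have hBX : ∀ s ∈ Icc (0:ℝ) (δ/2), ∀ t ∈ Icc (0:ℝ) ℓ, ‖X s t‖ ≤ BX := by
    intro s hs t ht
    have hs' := hIcc2 hs
    have := norm_le_gronwallBound_of_norm_deriv_right_le (f := X s)
      (f' := fun t => A s t * X s t) (δ := 1) (K := N * CA) (ε := 0) (a := 0) (b := ℓ)
      (hXcont s hs') (fun x hx => to_right_deriv hx (hXode' s hs' x (Ico_subset_Icc_self hx)))
      (by rw [hX0 s hs']; exact hone)
      (fun x hx => by
        have hx' := Ico_subset_Icc_self hx
        calc ‖A s x * X s x‖ ≤ N * ‖A s x‖ * ‖X s x‖ := mat_norm_mul _ _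
          _ ≤ N * CA * ‖X s x‖ + 0 := by
              have := hCA s hs x hx'
              nlinarith [this, mul_nonneg hN0 (norm_nonneg (X s x))]) t ht
    rw [gronwallBound_ε0, one_mul] at this
    refine le_trans this ?_
    rw [hBXdef]
    exact Real.exp_le_exp.2 (by nlinarith [ht.2, ht.1, mul_nonneg hN0 hCAn])
  -- FTC for A in s
  have hAFTC : ∀ s ∈ Icc (0:ℝ) (δ/2), ∀ t ∈ Icc (0:ℝ) ℓ,
      (∫ u in (0:ℝ)..s, A' u t) = A s t - A 0 t := by
    intro s hs t ht
    refine mat_ftc (F := fun u => A u t) (G := fun u => A' u t) hs.1 (fun u hu => ?_) ((hsliceu t ht s hs.2).mono subset_rfl)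
    exact (hAderiv' u (hIcc2 ⟨hu.1, le_trans hu.2 hs.2⟩) t ht).mono
      (fun x hx => hIcc2 ⟨hx.1, le_trans hx.2 hs.2⟩)
  have hAdiff : ∀ s ∈ Icc (0:ℝ) (δ/2), ∀ t ∈ Icc (0:ℝ) ℓ, ‖A s t - A 0 t‖ ≤ CB * s := by
    intro s hs t ht
    rw [← hAFTC s hs t ht]
    have := intervalIntegral.norm_integral_le_of_norm_le_const
      (a := 0) (b := s) (C := CB) (f := fun u => A' u t) (fun u hu => by
        rw [Set.uIoc_of_le hs.1] at hu
        exact hCB u ⟨le_of_lt hu.1, le_trans hu.2 hs.2⟩ t ht)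
    refine le_trans this ?_
    rw [abs_of_nonneg (by linarith [hs.1] : (0:ℝ) ≤ s - 0)]
    nlinarith [hs.1]
  -- Gronwall for X s - X 0
  set B1 : ℝ := gronwallBound 0 (N * CA) 1 ℓ with hB1def
  have hB1z : gronwallBound 0 (N * CA) 1 0 = 0 := by
    rw [gronwallBound]; split_ifs <;> simp
  have hB10 : 0 ≤ B1 := by
    have h := gb_mono (K := N * CA) (ε := 1) zero_le_one (mul_nonneg hN0 hCAn) (le_of_lt hℓ)
    rw [hB1z] at h
    exact h
  set C2 : ℝ := CB * N * BX * B1 with hC2def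
  have hC20 : 0 ≤ C2 := by positivity
  have hXdiff : ∀ s ∈ Icc (0:ℝ) (δ/2), ∀ t ∈ Icc (0:ℝ) ℓ,
      ‖X s t - X 0 t‖ ≤ s * C2 := by
    intro s hs t ht
    have hs' := hIcc2 hs
    have h0' := hIcc2 h02
    have hε0 : 0 ≤ N * (CB * s) * BX :=
      mul_nonneg (mul_nonneg hN0 (mul_nonneg hCBn hs.1)) hBX0
    have hgr := norm_le_gronwallBound_of_norm_deriv_right_le
      (f := fun t => X s t - X 0 t)
      (f' := fun t => A 0 t * (X s t - X 0 t) + (A s t - A 0 t) * X s t)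
      (δ := 0) (K := N * CA) (ε := N * (CB * s) * BX) (a := 0) (b := ℓ)
      ((hXcont s hs').sub (hXcont 0 h0'))
      (fun x hx => by
        have hx' := Ico_subset_Icc_self hx
        have hd := (hXode' s hs' x hx').sub (hXode' 0 h0' x hx')
        refine to_right_deriv hx (hd.congr_deriv ?_)
        noncomm_ring)
      (by show ‖X s 0 - X 0 0‖ ≤ (0:ℝ); rw [hX0 s hs', hX0 0 h0', sub_self]; simp)
      (fun x hx => by
        have hx' := Ico_subset_Icc_self hx
        have e1 : ‖A 0 x * (X s x - X 0 x)‖ ≤ N * CA * ‖X s x - X 0 x‖ := by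
          refine le_trans (matN _ _) ?_
          have := hCA 0 h02 x hx'
          nlinarith [mul_nonneg hN0 (norm_nonneg (X s x - X 0 x))]
        have e2 : ‖(A s x - A 0 x) * X s x‖ ≤ N * (CB * s) * BX := by
          refine le_trans (matN _ _) ?_
          have h1 := hAdiff s hs x hx'
          have h2 := hBX s hs x hx'
          have h3 := norm_nonneg (A s x - A 0 x)
          have h4 := norm_nonneg (X s x)
          nlinarith [mul_le_mul_of_nonneg_left
            (mul_le_mul h1 h2 h4 (mul_nonneg hCBn hs.1)) hN0]
        refine le_trans (norm_add_le _ _) ?_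
        linarith)
      t ht
    refine le_trans hgr (le_trans (gb_mono hε0 (mul_nonneg hN0 hCAn)
      (by linarith [ht.2] : t - 0 ≤ ℓ)) ?_)
    rw [gb_scale, hC2def, hB1def]
    ring_nf
    exact le_rfl
  -- symplectic facts
  have hA0J : ∀ t ∈ Icc (0:ℝ) ℓ, (A 0 t)ᵀ * J = -(J * A 0 t) :=
    fun t ht => eq_neg_of_add_eq_zero_left (hAsp 0 h0δ t ht)
  have hXT : ∀ t ∈ Icc (0:ℝ) ℓ, HasDerivWithinAt (fun u => (X 0 u)ᵀ)
      ((A 0 t * X 0 t)ᵀ) (Icc 0 ℓ) t := by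
    intro t ht
    exact matDeriv_iff.2 fun i j => hXode 0 h0δ t ht j i
  have hXTcont : ContinuousOn (fun t => (X 0 t)ᵀ) (Icc 0 ℓ) :=
    fun t ht => ((hXT t ht).continuousWithinAt)
  have hstar : ∀ s ∈ Ico (0:ℝ) δ,
      (∫ t in (0:ℝ)..ℓ, (X 0 t)ᵀ * J * ((A s t - A 0 t) * X s t))
        = (X 0 ℓ)ᵀ * J * X s ℓ - J := by
    intro s hs
    have hmf := mat_ftc (F := fun t => (X 0 t)ᵀ * J * X s t)
      (G := fun t => (X 0 t)ᵀ * J * ((A s t - A 0 t) * X s t)) (le_of_lt hℓ)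
      (fun t ht => by
        have hd := matDeriv_mul (matDeriv_mul (hXT t ht)
          (hasDerivWithinAt_const t _ J)) (hXode' s hs t ht)
        refine hd.congr_deriv ?_
        rw [Matrix.transpose_mul, mul_assoc (X 0 t)ᵀ, hA0J t ht]
        noncomm_ring)
      (matContOn_mul (matContOn_mul hXTcont continuousOn_const)
        (matContOn_mul ((hslice s hs).sub (hslice 0 h0δ)) (hXcont s hs)))
    simp only [hX0 s hs, hX0 0 h0δ, Matrix.transpose_one, Matrix.mul_one,
      Matrix.one_mul] at hmf
    exact hmf
  have hSymp : (X 0 ℓ)ᵀ * J * X 0 ℓ = J := by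
    have h1 := hstar 0 h0δ
    simp only [sub_self, Matrix.zero_mul, Matrix.mul_zero,
      intervalIntegral.integral_zero] at h1
    exact sub_eq_zero.1 h1.symm
  have hdet : IsUnit (X 0 ℓ).det := by
    have h1 := congrArg Matrix.det hSymp
    rw [Matrix.det_mul, Matrix.det_mul, Matrix.det_transpose] at h1
    rw [isUnit_iff_ne_zero]
    intro h
    rw [h, mul_zero] at h1
    exact (J_det_isUnit n).ne_zero h1.symm
  have hJinv : (X 0 ℓ)ᵀ * J = J * (X 0 ℓ)⁻¹ := by
    have h1 := Matrix.mul_nonsing_inv (X 0 ℓ) hdet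
    calc (X 0 ℓ)ᵀ * J = (X 0 ℓ)ᵀ * J * ((X 0 ℓ) * (X 0 ℓ)⁻¹) := by rw [h1, mul_one]
      _ = ((X 0 ℓ)ᵀ * J * (X 0 ℓ)) * (X 0 ℓ)⁻¹ := by noncomm_ring
      _ = J * (X 0 ℓ)⁻¹ := by rw [hSymp]
  -- the integrand of the RHS
  have hgcont : ContinuousOn (fun t => (X 0 t)ᵀ * (J * A' 0 t) * X 0 t) (Icc 0 ℓ) :=
    matContOn_mul (matContOn_mul hXTcont
      (matContOn_mul continuousOn_const (hslice' 0 h0δ))) (hXcont 0 h0δ)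
  have hgint : IntervalIntegrable (fun t => (X 0 t)ᵀ * (J * A' 0 t) * X 0 t)
      MeasureTheory.volume 0 ℓ := hgcont.intervalIntegrable_of_Icc (le_of_lt hℓ)
  set L : Matrix (Fin n ⊕ Fin n) (Fin n ⊕ Fin n) ℝ :=
    ∫ t in (0:ℝ)..ℓ, (X 0 t)ᵀ * (J * A' 0 t) * X 0 t with hLdef
  have hfcont : ∀ s ∈ Ico (0:ℝ) δ,
      ContinuousOn (fun t => (X 0 t)ᵀ * J * ((A s t - A 0 t) * X s t)) (Icc 0 ℓ) :=
    fun s hs => matContOn_mul (matContOn_mul hXTcont continuousOn_const)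
      (matContOn_mul ((hslice s hs).sub (hslice 0 h0δ)) (hXcont s hs))
  have hfint : ∀ s ∈ Ico (0:ℝ) δ,
      IntervalIntegrable (fun t => (X 0 t)ᵀ * J * ((A s t - A 0 t) * X s t))
        MeasureTheory.volume 0 ℓ :=
    fun s hs => (hfcont s hs).intervalIntegrable_of_Icc (le_of_lt hℓ)
  have hUC := Metric.uniformContinuousOn_iff.1
    (hKcomp.uniformContinuousOn_of_continuous (hA'cont.mono hKsub))
  -- the key derivative computation
  have hkey : HasDerivWithinAt (fun s => (X 0 ℓ)ᵀ * J * X s ℓ) L (Ico 0 δ) 0 := by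
    refine hasDerivWithinAt_iff_tendsto_slope.2 ?_
    rw [Metric.tendsto_nhdsWithin_nhds]
    intro ε hε
    set Q : ℝ := N * (N * BX) * (N * BX) with hQdef
    set R : ℝ := N * (N * BX) * (N * CB * C2) with hRdef
    have hQ0 : 0 ≤ Q := by positivity
    have hR0 : 0 ≤ R := by positivity
    set ε₁ : ℝ := ε / (2 * (ℓ * Q + 1)) with hε₁def
    have hℓQ : 0 < 2 * (ℓ * Q + 1) := by positivity
    have hε₁0 : 0 < ε₁ := div_pos hε hℓQ
    obtain ⟨d, hd0, hd⟩ := hUC ε₁ hε₁0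
    have hℓR : 0 < 2 * (ℓ * R + 1) := by positivity
    set r : ℝ := min (min (d/2) (δ/2)) (ε / (2 * (ℓ * R + 1))) with hrdef
    have hr0 : 0 < r := lt_min (lt_min (by linarith) (by linarith)) (div_pos hε hℓR)
    refine ⟨r, hr0, ?_⟩
    rintro s ⟨hsIco, hs0⟩ hdist
    have hs_pos : 0 < s := lt_of_le_of_ne hsIco.1 (Ne.symm (by simpa using hs0))
    have hsr : s < r := by rwa [Real.dist_eq, sub_zero, abs_of_pos hs_pos] at hdist
    have hs2 : s ≤ δ/2 :=
      le_of_lt (lt_of_lt_of_le hsr (le_trans (min_le_left _ _) (min_le_right _ _)))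
    have hsd : s < d := by
      have h2 : r ≤ d/2 := le_trans (min_le_left _ _) (min_le_left _ _)
      linarith
    have hsmem : s ∈ Icc (0:ℝ) (δ/2) := ⟨le_of_lt hs_pos, hs2⟩
    have hsI : s ∈ Ico (0:ℝ) δ := hIcc2 hsmem
    -- A' closeness on [0, s]
    have hA'close : ∀ u ∈ Icc (0:ℝ) s, ∀ t ∈ Icc (0:ℝ) ℓ, ‖A' u t - A' 0 t‖ ≤ ε₁ := by
      intro u hu t ht
      have hu2 : u ∈ Icc (0:ℝ) (δ/2) := ⟨hu.1, le_trans hu.2 hs2⟩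
      have hdd : dist ((u, t) : ℝ × ℝ) ((0, t) : ℝ × ℝ) < d := by
        rw [Prod.dist_eq]
        simp only [dist_self]
        rw [max_eq_left dist_nonneg, Real.dist_eq, sub_zero, abs_of_nonneg hu.1]
        exact lt_of_le_of_lt hu.2 hsd
      have := hd (u, t) ⟨hu2, ht⟩ (0, t) ⟨h02, ht⟩ hdd
      rw [dist_eq_norm] at this
      exact le_of_lt this
    -- second-order Taylor bound for A
    have hA2 : ∀ t ∈ Icc (0:ℝ) ℓ, ‖A s t - A 0 t - s • A' 0 t‖ ≤ ε₁ * s := by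
      intro t ht
      have hint : IntervalIntegrable (fun u => A' u t) MeasureTheory.volume 0 s :=
        ((hsliceu t ht s hs2).intervalIntegrable_of_Icc (le_of_lt hs_pos))
      have heq : A s t - A 0 t - s • A' 0 t = ∫ u in (0:ℝ)..s, (A' u t - A' 0 t) := by
        rw [intervalIntegral.integral_sub hint intervalIntegrable_const,
          hAFTC s hsmem t ht, intervalIntegral.integral_const, sub_zero]
      rw [heq]
      have hb := intervalIntegral.norm_integral_le_of_norm_le_const (C := ε₁)
        (a := 0) (b := s) (f := fun u => A' u t - A' 0 t) (fun u hu => by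
          rw [Set.uIoc_of_le (le_of_lt hs_pos)] at hu
          exact hA'close u ⟨le_of_lt hu.1, hu.2⟩ t ht)
      refine le_trans hb ?_
      rw [sub_zero, abs_of_pos hs_pos]
    -- pointwise bound on the integrand difference
    have hpt : ∀ t ∈ Icc (0:ℝ) ℓ,
        ‖(X 0 t)ᵀ * J * ((A s t - A 0 t) * X s t)
            - s • ((X 0 t)ᵀ * (J * A' 0 t) * X 0 t)‖ ≤ s * (Q * ε₁ + R * s) := by
      intro t ht
      have halg : (X 0 t)ᵀ * J * ((A s t - A 0 t) * X s t)
            - s • ((X 0 t)ᵀ * (J * A' 0 t) * X 0 t)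
          = (X 0 t)ᵀ * J *
            ((A s t - A 0 t - s • A' 0 t) * X s t + s • (A' 0 t * (X s t - X 0 t))) := by
        simp only [Matrix.mul_sub, Matrix.sub_mul, Matrix.mul_add, Matrix.add_mul,
          Matrix.mul_smul, Matrix.smul_mul, smul_sub, mul_assoc]
        abel
      rw [halg]
      have hXs := hBX s hsmem t ht
      have hX0t := hBX 0 h02 t ht
      have hXd := hXdiff s hsmem t ht
      have hA2t := hA2 t ht
      have hJn : ‖J‖ ≤ 1 := J_norm_le n
      have hXTn : ‖(X 0 t)ᵀ‖ ≤ BX := by rw [Matrix.norm_transpose]; exact hX0t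
      have houter : ‖(X 0 t)ᵀ * J‖ ≤ N * BX := by
        refine le_trans (matN _ _) ?_
        have := bd3 hN0 hXTn hJn (norm_nonneg _) hBX0
        linarith
      have hinner1 : ‖(A s t - A 0 t - s • A' 0 t) * X s t‖ ≤ N * (ε₁ * s) * BX := by
        exact le_trans (matN _ _)
          (bd3 hN0 hA2t hXs (norm_nonneg _) (mul_nonneg hε₁0.le hs_pos.le))
      have hinner2 : ‖s • (A' 0 t * (X s t - X 0 t))‖ ≤ s * (N * CB * (s * C2)) := by
        rw [norm_smul, Real.norm_eq_abs, abs_of_pos hs_pos]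
        have hm : ‖A' 0 t * (X s t - X 0 t)‖ ≤ N * CB * (s * C2) := by
          exact le_trans (matN _ _)
            (bd3 hN0 (hCB 0 h02 t ht) hXd (norm_nonneg _) hCBn)
        nlinarith [hs_pos.le]
      have hinner : ‖(A s t - A 0 t - s • A' 0 t) * X s t
          + s • (A' 0 t * (X s t - X 0 t))‖ ≤ N * (ε₁ * s) * BX + s * (N * CB * (s * C2)) :=
        le_trans (norm_add_le _ _) (by linarith)
      refine le_trans (matN _ _) ?_
      have hnn : (0:ℝ) ≤ N * (ε₁ * s) * BX + s * (N * CB * (s * C2)) := by positivity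
      calc N * ‖(X 0 t)ᵀ * J‖ * ‖(A s t - A 0 t - s • A' 0 t) * X s t
            + s • (A' 0 t * (X s t - X 0 t))‖
          ≤ N * (N * BX) * (N * (ε₁ * s) * BX + s * (N * CB * (s * C2))) :=
            bd3 hN0 houter hinner (norm_nonneg _) (mul_nonneg hN0 hBX0)
        _ = s * (Q * ε₁ + R * s) := by rw [hQdef, hRdef]; ring
    -- assemble the slope estimate
    have hFd : (∫ t in (0:ℝ)..ℓ, (X 0 t)ᵀ * J * ((A s t - A 0 t) * X s t))
        = (X 0 ℓ)ᵀ * J * X s ℓ - (X 0 ℓ)ᵀ * J * X 0 ℓ := by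
      rw [hstar s hsI, hSymp]
    have hdiffint : (∫ t in (0:ℝ)..ℓ, (X 0 t)ᵀ * J * ((A s t - A 0 t) * X s t)) - s • L
        = ∫ t in (0:ℝ)..ℓ, ((X 0 t)ᵀ * J * ((A s t - A 0 t) * X s t)
            - s • ((X 0 t)ᵀ * (J * A' 0 t) * X 0 t)) := by
      have h2 : IntervalIntegrable (fun t => s • ((X 0 t)ᵀ * (J * A' 0 t) * X 0 t))
          MeasureTheory.volume 0 ℓ := hgint.smul s
      rw [intervalIntegral.integral_sub (hfint s hsI) h2,
        intervalIntegral.integral_smul, ← hLdef]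
    have hbnd : ‖(∫ t in (0:ℝ)..ℓ, (X 0 t)ᵀ * J * ((A s t - A 0 t) * X s t)) - s • L‖
        ≤ s * (Q * ε₁ + R * s) * ℓ := by
      rw [hdiffint]
      have hb := intervalIntegral.norm_integral_le_of_norm_le_const
        (C := s * (Q * ε₁ + R * s)) (a := 0) (b := ℓ) (fun t htu => by
          rw [Set.uIoc_of_le (le_of_lt hℓ)] at htu
          exact hpt t ⟨le_of_lt htu.1, htu.2⟩)
      refine le_trans hb ?_
      rw [sub_zero, abs_of_pos hℓ]
    rw [dist_eq_norm, slope_def_module, sub_zero]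
    have hrw : ((fun s' => (X 0 ℓ)ᵀ * J * X s' ℓ) s)
          - ((fun s' => (X 0 ℓ)ᵀ * J * X s' ℓ) 0)
        = ∫ t in (0:ℝ)..ℓ, (X 0 t)ᵀ * J * ((A s t - A 0 t) * X s t) := hFd.symm
    rw [hrw]
    have hrw2 : s⁻¹ • (∫ t in (0:ℝ)..ℓ, (X 0 t)ᵀ * J * ((A s t - A 0 t) * X s t)) - L
        = s⁻¹ • ((∫ t in (0:ℝ)..ℓ, (X 0 t)ᵀ * J * ((A s t - A 0 t) * X s t)) - s • L) := by
      rw [smul_sub, smul_smul, inv_mul_cancel₀ (ne_of_gt hs_pos), one_smul]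
    rw [hrw2, norm_smul, Real.norm_eq_abs, abs_of_pos (inv_pos.2 hs_pos)]
    have hfin : s⁻¹ * (s * (Q * ε₁ + R * s) * ℓ) = ℓ * (Q * ε₁ + R * s) := by
      field_simp
    have h1 : ℓ * Q * ε₁ < ε / 2 := by
      have hid : ε₁ * (2 * (ℓ * Q + 1)) = ε := by
        rw [hε₁def]; field_simp
      nlinarith [hε₁0, mul_nonneg hℓ.le hQ0]
    have h2 : ℓ * R * s < ε / 2 := by
      have hsr2 : s < ε / (2 * (ℓ * R + 1)) :=
        lt_of_lt_of_le hsr (min_le_right _ _)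
      have hid : (ε / (2 * (ℓ * R + 1))) * (2 * (ℓ * R + 1)) = ε := by
        field_simp
      nlinarith [mul_nonneg hℓ.le hR0, hs_pos]
    calc s⁻¹ * ‖(∫ t in (0:ℝ)..ℓ, (X 0 t)ᵀ * J * ((A s t - A 0 t) * X s t)) - s • L‖
        ≤ s⁻¹ * (s * (Q * ε₁ + R * s) * ℓ) :=
          mul_le_mul_of_nonneg_left hbnd (inv_pos.2 hs_pos).le
      _ = ℓ * (Q * ε₁ + R * s) := hfin
      _ < ε := by nlinarith
  -- the other derivative of the same function
  have hΦ1 : HasDerivWithinAt (fun s => (X 0 ℓ)ᵀ * J * X s ℓ)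
      ((X 0 ℓ)ᵀ * J * DXl) (Ico 0 δ) 0 := by
    have hc := matDeriv_mul (hasDerivWithinAt_const (0:ℝ) (Ico (0:ℝ) δ)
      ((X 0 ℓ)ᵀ * J)) hDXl'
    refine hc.congr_deriv ?_
    simp
  have hU : UniqueDiffWithinAt ℝ (Ico (0:ℝ) δ) 0 := (uniqueDiffOn_Ico 0 δ) 0 h0δ
  have hLeq : (X 0 ℓ)ᵀ * J * DXl = L :=
    (hΦ1.derivWithin hU).symm.trans (hkey.derivWithin hU)
  have hfinal : J * (X 0 ℓ)⁻¹ * DXl = L := by rw [← hJinv]; exact hLeq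
  intro i j
  rw [hfinal]
  have hentry := ContinuousLinearMap.intervalIntegral_comp_comm
    ((ContinuousLinearMap.proj (R := ℝ) (ι := Fin n ⊕ Fin n) (φ := fun _ => ℝ) j).comp
     (ContinuousLinearMap.proj (R := ℝ) (ι := Fin n ⊕ Fin n)
       (φ := fun _ => (Fin n ⊕ Fin n) → ℝ) i)) hgint
  rw [hLdef]
  exact hentry.symm




end BottAux

/-- Bott's variational formula, Equation (star) of Lemma 7.2.
For a family `A s t ∈ sp(2n, ℝ)`, continuous on `[0,δ) × [0,ℓ]` and continuously
differentiable in `s` with derivative `A' s t`, let `X s` solve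
`∂ₜ X s t = A s t * X s t`, `X s 0 = I`, and let `DXl` be the `s`-derivative of
`X s ℓ` at `s = 0`.  Then
`J · (X 0 ℓ)⁻¹ · DXl = ∫_0^ℓ (X 0 t)ᵀ · (J · A' 0 t) · (X 0 t) dt`. -/
theorem bott_variational_formula
    (n : ℕ) (hn : 1 ≤ n) (ℓ δ : ℝ) (hℓ : 0 < ℓ) (hδ : 0 < δ)
    (A A' : ℝ → ℝ → Matrix (Fin n ⊕ Fin n) (Fin n ⊕ Fin n) ℝ)
    (X : ℝ → ℝ → Matrix (Fin n ⊕ Fin n) (Fin n ⊕ Fin n) ℝ)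
    (DXl : Matrix (Fin n ⊕ Fin n) (Fin n ⊕ Fin n) ℝ)
    (hAcont : ContinuousOn (fun p : ℝ × ℝ => A p.1 p.2) (Set.Ico 0 δ ×ˢ Set.Icc 0 ℓ))
    (hA'cont : ContinuousOn (fun p : ℝ × ℝ => A' p.1 p.2) (Set.Ico 0 δ ×ˢ Set.Icc 0 ℓ))
    (hAderiv : ∀ s ∈ Set.Ico (0 : ℝ) δ, ∀ t ∈ Set.Icc (0 : ℝ) ℓ, ∀ i j : Fin n ⊕ Fin n,
      HasDerivWithinAt (fun u : ℝ => A u t i j) (A' s t i j) (Set.Ico 0 δ) s)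
    (hAsp : ∀ s ∈ Set.Ico (0 : ℝ) δ, ∀ t ∈ Set.Icc (0 : ℝ) ℓ,
      (A s t)ᵀ * stdSymplecticJ n + stdSymplecticJ n * A s t = 0)
    (hX0 : ∀ s ∈ Set.Ico (0 : ℝ) δ, X s 0 = 1)
    (hXode : ∀ s ∈ Set.Ico (0 : ℝ) δ, ∀ t ∈ Set.Icc (0 : ℝ) ℓ, ∀ i j : Fin n ⊕ Fin n,
      HasDerivWithinAt (fun u : ℝ => X s u i j) ((A s t * X s t) i j) (Set.Icc 0 ℓ) t)
    (hDXl : ∀ i j : Fin n ⊕ Fin n,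
      HasDerivWithinAt (fun s : ℝ => X s ℓ i j) (DXl i j) (Set.Ico 0 δ) 0) :
    ∀ i j : Fin n ⊕ Fin n,
      (stdSymplecticJ n * (X 0 ℓ)⁻¹ * DXl) i j
        = ∫ t in (0 : ℝ)..ℓ, ((X 0 t)ᵀ * (stdSymplecticJ n * A' 0 t) * X 0 t) i j := by
  exact bott_core n hn ℓ δ hℓ hδ A A' X DXl hAcont hA'cont hAderiv hAsp hX0 hXode hDXl
end

section
/- Let n ≥ 2 and ℓ > 0. Let R, τ : [0, ℓ] → M_{n−1}(ℝ) be continuous with R(t) and τ(t) symmetric for all t, τ(t) positive semidefinite for all t ∈ [0, ℓ], and τ(t) positive definite for all t in some nonempty open subinterval of (0, ℓ). For each v ∈ ℝ^{n−1} × ℝ^{n−1} = ℝ^{2(n−1)} let (x_v, y_v) : [0, ℓ] → ℝ^{n−1} × ℝ^{n−1} be the solution of the linear system x' = y, y' = −R(t)·x with initial value (x_v(0), y_v(0)) = v. Then the quadratic form Q(v) = ∫_0^ℓ ⟨τ(t)·x_v(t), x_v(t)⟩ dt on ℝ^{2(n−1)} is positive definite: Q(v) ≥ 0 for all v, and Q(v)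 = 0 only for v = 0. -/
open Matrix

/-- positive definiteness of the Bott quadratic form, concluding
step of Lemma 7.2.  Let `R, τ : [0,ℓ] → Sym(n-1)` be continuous, `τ t`
positive semidefinite for `t ∈ [0,ℓ]` and positive definite on some nonempty
open subinterval of `(0,ℓ)`.  For each initial value `v = (v₁, v₂)` let
`(x v, y v)` solve `x' = y`, `y' = -R t x`, `(x v 0, y v 0) = v`.  Then
`Q v = ∫_0^ℓ ⟨τ t · x v t, x v t⟩ dt` is a positive definite quadratic form. -/
theorem bott_quadratic_form_posdef
    (n : ℕ) (hn : 2 ≤ n) (ℓ : ℝ) (hℓ : 0 < ℓ)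
    (R τ : ℝ → Matrix (Fin (n - 1)) (Fin (n - 1)) ℝ)
    (hRcont : Continuous R) (hτcont : Continuous τ)
    (hRsymm : ∀ t : ℝ, (R t)ᵀ = R t) (hτsymm : ∀ t : ℝ, (τ t)ᵀ = τ t)
    (hτpsd : ∀ t ∈ Set.Icc (0 : ℝ) ℓ, ∀ w : Fin (n - 1) → ℝ, 0 ≤ w ⬝ᵥ (τ t).mulVec w)
    (hτpd : ∃ a b : ℝ, 0 ≤ a ∧ a < b ∧ b ≤ ℓ ∧
      ∀ t ∈ Set.Ioo a b, ∀ w : Fin (n - 1) → ℝ, w ≠ 0 → 0 < w ⬝ᵥ (τ t).mulVec w)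
    (x y : ((Fin (n - 1) → ℝ) × (Fin (n - 1) → ℝ)) → ℝ → (Fin (n - 1) → ℝ))
    (hx0 : ∀ v, x v 0 = v.1) (hy0 : ∀ v, y v 0 = v.2)
    (hxode : ∀ v, ∀ t ∈ Set.Icc (0 : ℝ) ℓ, ∀ i : Fin (n - 1),
      HasDerivWithinAt (fun u : ℝ => x v u i) (y v t i) (Set.Icc 0 ℓ) t)
    (hyode : ∀ v, ∀ t ∈ Set.Icc (0 : ℝ) ℓ, ∀ i : Fin (n - 1),
      HasDerivWithinAt (fun u : ℝ => y v u i) (-(R t).mulVec (x v t) i) (Set.Icc 0 ℓ) t) :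
    (∀ v, 0 ≤ ∫ t in (0 : ℝ)..ℓ, (τ t).mulVec (x v t) ⬝ᵥ x v t) ∧
    ∀ v, (∫ t in (0 : ℝ)..ℓ, (τ t).mulVec (x v t) ⬝ᵥ x v t) = 0 → v = 0 := by
  obtain ⟨a, b, ha0, hab, hbl, hpd⟩ := hτpd
  -- coordinatewise continuity of the solutions
  have hxci : ∀ v i, ContinuousOn (fun t => x v t i) (Set.Icc 0 ℓ) :=
    fun v i t ht => (hxode v t ht i).continuousWithinAt
  have hyci : ∀ v i, ContinuousOn (fun t => y v t i) (Set.Icc 0 ℓ) :=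
    fun v i t ht => (hyode v t ht i).continuousWithinAt
  have hxc : ∀ v, ContinuousOn (x v) (Set.Icc 0 ℓ) :=
    fun v => continuousOn_pi.2 (hxci v)
  have hyc : ∀ v, ContinuousOn (y v) (Set.Icc 0 ℓ) :=
    fun v => continuousOn_pi.2 (hyci v)
  -- continuity of the integrand
  have hfc : ∀ v, ContinuousOn (fun t => (τ t).mulVec (x v t) ⬝ᵥ x v t) (Set.Icc 0 ℓ) := by
    intro v
    simp only [Matrix.mulVec, dotProduct]
    apply continuousOn_finset_sum
    intro i _
    exact (continuousOn_finset_sum _ fun j _ =>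
      ((hτcont.matrix_elem i j).continuousOn.mul (hxci v j))).mul (hxci v i)
  have hint : ∀ v, IntervalIntegrable (fun t => (τ t).mulVec (x v t) ⬝ᵥ x v t)
      MeasureTheory.volume 0 ℓ :=
    fun v => ((hfc v).mono (by rw [Set.uIcc_of_le hℓ.le])).intervalIntegrable
  have hnn : ∀ v, ∀ u ∈ Set.Icc (0:ℝ) ℓ, 0 ≤ (τ u).mulVec (x v u) ⬝ᵥ x v u := by
    intro v u hu
    have := hτpsd u hu (x v u)
    rwa [dotProduct_comm] at this
  constructor
  · intro v
    exact intervalIntegral.integral_nonneg hℓ.le (hnn v)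
  · intro v hQ
    -- the integrand vanishes a.e. on (0, ℓ]
    have hae : (fun t => (τ t).mulVec (x v t) ⬝ᵥ x v t)
        =ᵐ[MeasureTheory.volume.restrict (Set.Ioc 0 ℓ)] 0 := by
      refine (intervalIntegral.integral_eq_zero_iff_of_le_of_nonneg_ae hℓ.le ?_ (hint v)).1 hQ
      exact (MeasureTheory.ae_restrict_iff' measurableSet_Ioc).2
        (Filter.Eventually.of_forall fun u hu => hnn v u (Set.Ioc_subset_Icc_self hu))
    have hzero : MeasureTheory.volume
        ({u | (τ u).mulVec (x v u) ⬝ᵥ x v u ≠ 0} ∩ Set.Ioc 0 ℓ) = 0 := by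
      have h := hae
      rw [Filter.EventuallyEq, MeasureTheory.ae_iff] at h
      rw [MeasureTheory.Measure.restrict_apply' measurableSet_Ioc] at h
      exact h
    -- the integrand vanishes pointwise on (a, b)
    have hIoosub : Set.Ioo a b ⊆ Set.Icc 0 ℓ := fun u hu =>
      ⟨ha0.trans hu.1.le, hu.2.le.trans hbl⟩
    have hfz : ∀ u ∈ Set.Ioo a b, (τ u).mulVec (x v u) ⬝ᵥ x v u = 0 := by
      intro u hu
      by_contra hne
      have hZopen : IsOpen (Set.Ioo a b ∩
          (fun t => (τ t).mulVec (x v t) ⬝ᵥ x v t) ⁻¹' ({0}ᶜ)) :=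
        ((hfc v).mono hIoosub).isOpen_inter_preimage isOpen_Ioo
          isOpen_compl_singleton
      have hsub : (Set.Ioo a b ∩
          (fun t => (τ t).mulVec (x v t) ⬝ᵥ x v t) ⁻¹' ({0}ᶜ)) ⊆
          {u | (τ u).mulVec (x v u) ⬝ᵥ x v u ≠ 0} ∩ Set.Ioc 0 ℓ := by
        rintro z ⟨hz1, hz2⟩
        exact ⟨hz2, ⟨ha0.trans_lt hz1.1, hz1.2.le.trans hbl⟩⟩
      have hpos := hZopen.measure_pos MeasureTheory.volume ⟨u, hu, hne⟩
      exact absurd (MeasureTheory.measure_mono_null hsub hzero)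
        (ne_of_gt hpos)
    -- hence x v vanishes on (a, b)
    have hxz : ∀ u ∈ Set.Ioo a b, x v u = 0 := by
      intro u hu
      by_contra hne
      have := hpd u hu (x v u) hne
      rw [dotProduct_comm] at this
      rw [hfz u hu] at this
      exact lt_irrefl 0 this
    -- hence y v vanishes on (a, b)
    have hyz : ∀ u ∈ Set.Ioo a b, y v u = 0 := by
      intro u hu
      funext i
      have hu' : u ∈ Set.Icc (0:ℝ) ℓ := hIoosub hu
      have h1 := hxode v u hu' i
      have heq : (fun t => x v t i) =ᶠ[nhds u] fun _ => 0 := by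
        filter_upwards [Ioo_mem_nhds hu.1 hu.2] with t ht
        rw [hxz t ht]; rfl
      have h2 : HasDerivWithinAt (fun _ : ℝ => (0:ℝ)) (y v u i) (Set.Icc 0 ℓ) u :=
        h1.congr_of_eventuallyEq
          ((heq.filter_mono nhdsWithin_le_nhds).symm) (by simp [hxz u hu])
      have h3 : HasDerivWithinAt (fun _ : ℝ => (0:ℝ)) 0 (Set.Icc 0 ℓ) u :=
        (hasDerivWithinAt_const u _ 0)
      have hud : UniqueDiffWithinAt ℝ (Set.Icc (0:ℝ) ℓ) u := uniqueDiffOn_Icc hℓ u hu'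
      have h5 := h2.derivWithin hud
      have h4 := h3.derivWithin hud
      rw [h5] at h4
      simp [h4]
    -- ODE uniqueness backwards from t₀ to 0
    set t₀ : ℝ := (a + b) / 2 with ht₀def
    have hat₀ : a < t₀ := by simp only [ht₀def]; linarith
    have ht₀b : t₀ < b := by simp only [ht₀def]; linarith
    have ht₀Ioo : t₀ ∈ Set.Ioo a b := ⟨hat₀, ht₀b⟩
    have ht₀pos : 0 < t₀ := ha0.trans_lt hat₀
    have ht₀ℓ : t₀ ≤ ℓ := (ht₀b.le.trans hbl)
    -- clamping, bounds, Lipschitz vector field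
    set c : ℝ → ℝ := fun s => max 0 (min s ℓ) with hcdef
    have hc_mem : ∀ s, c s ∈ Set.Icc (0:ℝ) ℓ := fun s =>
      ⟨le_max_left _ _, max_le hℓ.le (min_le_right _ _)⟩
    have hc_eq : ∀ s ∈ Set.Icc (0:ℝ) ℓ, c s = s := by
      intro s hs
      simp only [hcdef]
      rw [min_eq_left hs.2, max_eq_right hs.1]
    set B : ℝ → ℝ := fun s => ∑ i, ∑ j, |R s i j| with hBdef
    have hBcont : Continuous B := by
      apply continuous_finset_sum
      intro i _
      exact continuous_finset_sum _ fun j _ => (hRcont.matrix_elem i j).abs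
    obtain ⟨C, hC⟩ := isCompact_Icc.exists_bound_of_continuousOn
      (s := Set.Icc (0:ℝ) ℓ) hBcont.continuousOn
    have hC' : ∀ s ∈ Set.Icc (0:ℝ) ℓ, B s ≤ C := fun s hs =>
      (le_abs_self _).trans (by simpa [Real.norm_eq_abs] using hC s hs)
    have hC0 : 0 ≤ C := le_trans (norm_nonneg (B 0)) (hC 0 ⟨le_rfl, hℓ.le⟩)
    have key : ∀ (M : Matrix (Fin (n-1)) (Fin (n-1)) ℝ) (w : Fin (n-1) → ℝ),
        ‖M.mulVec w‖ ≤ (∑ i, ∑ j, |M i j|) * ‖w‖ := by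
      intro M w
      rw [pi_norm_le_iff_of_nonneg (by positivity)]
      intro i
      calc ‖M.mulVec w i‖ = |∑ j, M i j * w j| := by
            simp [Matrix.mulVec, dotProduct, Real.norm_eq_abs]
        _ ≤ ∑ j, |M i j * w j| := Finset.abs_sum_le_sum_abs _ _
        _ ≤ ∑ j, |M i j| * ‖w‖ := by
            apply Finset.sum_le_sum
            intro j _
            rw [abs_mul]
            exact mul_le_mul_of_nonneg_left
              (by simpa [Real.norm_eq_abs] using norm_le_pi_norm w j) (abs_nonneg _)
        _ = (∑ j, |M i j|) * ‖w‖ := (Finset.sum_mul _ _ _).symm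
        _ ≤ (∑ i', ∑ j, |M i' j|) * ‖w‖ := by
            apply mul_le_mul_of_nonneg_right _ (norm_nonneg w)
            exact Finset.single_le_sum (f := fun i' => ∑ j, |M i' j|)
              (fun _ _ => by positivity) (Finset.mem_univ i)
    set K : NNReal := ⟨max 1 C, le_trans zero_le_one (le_max_left _ _)⟩ with hKdef
    set V : ℝ → ((Fin (n-1) → ℝ) × (Fin (n-1) → ℝ)) → ((Fin (n-1) → ℝ) × (Fin (n-1) → ℝ)) :=
      fun s p => (p.2, -(R (c s)).mulVec p.1) with hVdef
    have hV : ∀ s, LipschitzWith K (V s) := by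
      intro s
      apply LipschitzWith.of_dist_le_mul
      intro p q
      have hKval : (K : ℝ) = max 1 C := rfl
      rw [hKval]
      rw [show dist (V s p) (V s q) =
          max (dist p.2 q.2) (dist (-(R (c s)).mulVec p.1) (-(R (c s)).mulVec q.1)) from rfl]
      apply max_le
      · calc dist p.2 q.2 ≤ dist p q := by rw [Prod.dist_eq]; exact le_max_right _ _
          _ ≤ max 1 C * dist p q := le_mul_of_one_le_left dist_nonneg (le_max_left _ _)
      · have h1 : dist (-(R (c s)).mulVec p.1) (-(R (c s)).mulVec q.1)
            = ‖(R (c s)).mulVec (p.1 - q.1)‖ := by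
          rw [dist_eq_norm, Matrix.mulVec_sub]
          rw [show -(R (c s)).mulVec p.1 - -(R (c s)).mulVec q.1
            = -((R (c s)).mulVec p.1 - (R (c s)).mulVec q.1) by ring]
          rw [norm_neg]
        rw [h1]
        calc ‖(R (c s)).mulVec (p.1 - q.1)‖ ≤ B (c s) * ‖p.1 - q.1‖ := key _ _
          _ ≤ C * dist p.1 q.1 := by
              rw [← dist_eq_norm]
              exact mul_le_mul_of_nonneg_right (hC' _ (hc_mem s)) dist_nonneg
          _ ≤ max 1 C * dist p q := by
              apply mul_le_mul (le_max_right _ _) _ dist_nonneg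
                (le_trans zero_le_one (le_max_left _ _))
              rw [Prod.dist_eq]; exact le_max_left _ _
    -- the two solutions
    set F : ℝ → ((Fin (n-1) → ℝ) × (Fin (n-1) → ℝ)) := fun t => (x v t, y v t) with hFdef
    have hIccsub : Set.Icc (0:ℝ) t₀ ⊆ Set.Icc 0 ℓ :=
      Set.Icc_subset_Icc_right ht₀ℓ
    have hFcont : ContinuousOn F (Set.Icc 0 t₀) :=
      (ContinuousOn.prodMk ((hxc v).mono hIccsub) ((hyc v).mono hIccsub))
    have hF' : ∀ t ∈ Set.Ioc (0:ℝ) t₀, HasDerivWithinAt F (V t (F t)) (Set.Iic t) t := by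
      intro t ht
      have htl : t ∈ Set.Icc (0:ℝ) ℓ := ⟨ht.1.le, ht.2.trans ht₀ℓ⟩
      have hmem : Set.Icc (0:ℝ) ℓ ∈ nhdsWithin t (Set.Iic t) := by
        rw [mem_nhdsWithin]
        refine ⟨Set.Ioi 0, isOpen_Ioi, ht.1, ?_⟩
        rintro z ⟨hz1, hz2⟩
        exact ⟨(Set.mem_Ioi.1 hz1).le, le_trans hz2 htl.2⟩
      have h1 : HasDerivWithinAt (x v) (y v t) (Set.Icc 0 ℓ) t :=
        hasDerivWithinAt_pi.2 fun i => hxode v t htl i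
      have h2 : HasDerivWithinAt (y v) (-(R t).mulVec (x v t)) (Set.Icc 0 ℓ) t :=
        hasDerivWithinAt_pi.2 fun i => hyode v t htl i
      have h3 := (h1.mono_of_mem_nhdsWithin hmem).prodMk (h2.mono_of_mem_nhdsWithin hmem)
      have hVeq : V t (F t) = (y v t, -(R t).mulVec (x v t)) := by
        simp only [hVdef, hFdef, hc_eq t htl]
      rw [hVeq]
      exact h3
    have hG' : ∀ t ∈ Set.Ioc (0:ℝ) t₀, HasDerivWithinAt
        (fun _ : ℝ => (0 : (Fin (n-1) → ℝ) × (Fin (n-1) → ℝ))) (V t 0) (Set.Iic t) t := by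
      intro t ht
      have : V t 0 = 0 := by
        simp only [hVdef]
        simp [Matrix.mulVec_zero]
      rw [this]
      exact hasDerivWithinAt_const _ _ _
    have heq0 : F t₀ = 0 := by
      simp only [hFdef]
      rw [hxz t₀ ht₀Ioo, hyz t₀ ht₀Ioo]
      rfl
    have huniq := ODE_solution_unique_of_mem_Icc_left
      (v := V) (K := K) (s := fun _ => Set.univ)
      (fun t _ => (hV t).lipschitzOnWith)
      hFcont hF' (fun t _ => Set.mem_univ _)
      continuousOn_const hG' (fun t _ => Set.mem_univ _)
      heq0
    have h0 : F 0 = 0 := huniq ⟨le_rfl, ht₀pos.le⟩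
    have hx' : x v 0 = 0 := congrArg Prod.fst h0
    have hy' : y v 0 = 0 := congrArg Prod.snd h0
    rw [hx0 v] at hx'
    rw [hy0 v] at hy'
    exact Prod.ext hx' hy'
end
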